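/- arXiv:math/0211122 — 3 statements merged into one kernel-verified Lean document; each statement's English description precedes it below -/
import Mathlib

section
/- Fix a positive integer k and μ ∈ M*, and let e_1, …, e_l be an orthonormal basis of V. The function (v,τ) ↦ Θ_{μ,k}(v;τ) on V_ℂ × ℍ is smooth (holomorphic in each variable) and satisfies the heat-type eigenvalue equation −(2k/(2πi)) · ∂Θ_{μ,k}/∂τ + (1/(2πi)²) · Σ_{j=1}^{l} ∂²Θ_{μ,k}/∂v_j² = ⟨μ,μ⟩ · Θ_{μ,k}, where ∂/∂v_j denotes the complex directional derivative in the direction e_j and ∂/∂τ the derivative in the upper-half-plane variable. -/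
open scoped BigOperators InnerProductSpace
open Complex Filter

noncomputable section

abbrev Evec (l : ℕ) := EuclideanSpace ℝ (Fin l)
abbrev EvecC (l : ℕ) := EuclideanSpace ℂ (Fin l)

/-- Inclusion of the real Euclidean space into its complexification. -/
def toC {l : ℕ} (x : Evec l) : EvecC l := WithLp.toLp 2 (fun i => (x i : ℂ))

/-- The complex-bilinear extension of the standard real inner product. -/
def cbil {l : ℕ} (v w : EvecC l) : ℂ := ∑ i, v i * w i

/-- The full-rank lattice spanned over `ℤ` by the `ℝ`-basis `b`. -/
def latt {l : ℕ} (b : Module.Basis (Fin l) ℝ (Evec l)) : Set (Evec l) :=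
  {x | ∃ c : Fin l → ℤ, x = ∑ i, c i • b i}

/-- The dual lattice `M* = {x | ⟪x, β⟫ ∈ ℤ for all β ∈ M}`. -/
def dualLatt {l : ℕ} (b : Module.Basis (Fin l) ℝ (Evec l)) : Set (Evec l) :=
  {x | ∀ β ∈ latt b, ∃ n : ℤ, ⟪x, β⟫_ℝ = (n : ℝ)}

/-- The lattice point `γ = (1/k)·μ + Σᵢ cᵢ·bᵢ` of the coset `(1/k)μ + M`. -/
def gam {l : ℕ} (b : Module.Basis (Fin l) ℝ (Evec l)) (k : ℕ) (μ : Evec l)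
    (c : Fin l → ℤ) : Evec l :=
  (k : ℝ)⁻¹ • μ + ∑ i, c i • b i

/-- The summand of the theta series `Θ_{μ,k}`, indexed by `γ ∈ (1/k)μ + M`. -/
def thetaTerm {l : ℕ} (b : Module.Basis (Fin l) ℝ (Evec l)) (k : ℕ) (μ : Evec l)
    (τ : ℂ) (v : EvecC l) (c : Fin l → ℤ) : ℂ :=
  Complex.exp (2 * (Real.pi : ℂ) * Complex.I * (k : ℂ) * cbil (toC (gam b k μ c)) v
    + (Real.pi : ℂ) * Complex.I * (k : ℂ) * τ * (⟪gam b k μ c, gam b k μ c⟫_ℝ : ℂ)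
    - (Real.pi : ℂ) * Complex.I * τ / (k : ℂ) * (⟪μ, μ⟫_ℝ : ℂ))

/-- The theta function `Θ_{μ,k}(v; τ)`. -/
def theta {l : ℕ} (b : Module.Basis (Fin l) ℝ (Evec l)) (k : ℕ) (μ : Evec l)
    (τ : ℂ) (v : EvecC l) : ℂ :=
  ∑' c : Fin l → ℤ, thetaTerm b k μ τ v c

-- basic coordinate bounds
lemma coord_le_norm_C {l : ℕ} (v : EvecC l) (i : Fin l) : ‖v i‖ ≤ ‖v‖ := by
  rw [EuclideanSpace.norm_eq]
  have h1 : ‖v i‖ = Real.sqrt (‖v i‖ ^ 2) := (Real.sqrt_sq (norm_nonneg _)).symm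
  rw [h1]
  apply Real.sqrt_le_sqrt
  exact Finset.single_le_sum (f := fun j => ‖v j‖ ^ 2) (fun j _ => by positivity)
    (Finset.mem_univ i)

lemma coord_le_norm_R {l : ℕ} (x : Evec l) (i : Fin l) : |x i| ≤ ‖x‖ := by
  rw [EuclideanSpace.norm_eq]
  have h1 : |x i| = Real.sqrt (|x i| ^ 2) := (Real.sqrt_sq (abs_nonneg _)).symm
  rw [h1]
  apply Real.sqrt_le_sqrt
  have : |x i| ^ 2 = ‖x i‖ ^ 2 := by rw [Real.norm_eq_abs]
  rw [this]
  exact Finset.single_le_sum (f := fun j => ‖x j‖ ^ 2) (fun j _ => by positivity)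
    (Finset.mem_univ i)

lemma abs_cbil_le {l : ℕ} (x : Evec l) (v : EvecC l) :
    ‖cbil (toC x) v‖ ≤ (l : ℝ) * ‖x‖ * ‖v‖ := by
  rw [cbil]
  calc ‖∑ i, toC x i * v i‖ ≤ ∑ i, ‖toC x i * v i‖ := norm_sum_le _ _
    _ ≤ ∑ i : Fin l, ‖x‖ * ‖v‖ := by
        refine Finset.sum_le_sum fun i _ => ?_
        rw [norm_mul]
        have h1 : ‖toC x i‖ ≤ ‖x‖ := by
          rw [toC]; simp only [Complex.norm_real]
          exact (coord_le_norm_R x i)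
        exact mul_le_mul h1 (coord_le_norm_C v i) (norm_nonneg _) (norm_nonneg _)
    _ = (l : ℝ) * ‖x‖ * ‖v‖ := by
        rw [Finset.sum_const, Finset.card_univ, Fintype.card_fin]; push_cast; ring

lemma re_aux (a : ℝ) (z : ℂ) : ((a : ℂ) * Complex.I * z).re = -(a * z.im) := by
  simp [Complex.mul_re, Complex.mul_im]

lemma norm_thetaTerm {l : ℕ} (b : Module.Basis (Fin l) ℝ (Evec l)) (k : ℕ) (μ : Evec l)
    (τ : ℂ) (v : EvecC l) (c : Fin l → ℤ) :
    ‖thetaTerm b k μ τ v c‖ =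
      Real.exp (-(2 * Real.pi * k * (cbil (toC (gam b k μ c)) v).im)
        - Real.pi * k * (⟪gam b k μ c, gam b k μ c⟫_ℝ) * τ.im
        + Real.pi * (⟪μ, μ⟫_ℝ) / k * τ.im) := by
  rw [thetaTerm, Complex.norm_exp]
  congr 1
  have harg : (2 * (Real.pi : ℂ) * Complex.I * (k : ℂ) * cbil (toC (gam b k μ c)) v
      + (Real.pi : ℂ) * Complex.I * (k : ℂ) * τ * (⟪gam b k μ c, gam b k μ c⟫_ℝ : ℂ)
      - (Real.pi : ℂ) * Complex.I * τ / (k : ℂ) * (⟪μ, μ⟫_ℝ : ℂ))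
      = ((2 * Real.pi * k : ℝ) : ℂ) * Complex.I * cbil (toC (gam b k μ c)) v
        + ((Real.pi * k * ⟪gam b k μ c, gam b k μ c⟫_ℝ : ℝ) : ℂ) * Complex.I * τ
        - ((Real.pi * ⟪μ, μ⟫_ℝ / k : ℝ) : ℂ) * Complex.I * τ := by
    push_cast; ring
  rw [harg, Complex.sub_re, Complex.add_re, re_aux, re_aux, re_aux]
  ring

lemma norm_thetaTerm_le {l : ℕ} (b : Module.Basis (Fin l) ℝ (Evec l)) (k : ℕ) (hk : 0 < k)
    (μ : Evec l) {t₀ T R : ℝ} (ht0 : 0 < t₀) {τ : ℂ} (h1 : t₀ ≤ τ.im) (h2 : τ.im ≤ T)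
    {v : EvecC l} (hv : ‖v‖ ≤ R) (c : Fin l → ℤ) :
    ‖thetaTerm b k μ τ v c‖ ≤ Real.exp (Real.pi * ‖μ‖ ^ 2 / k * T) *
      Real.exp ((2 * Real.pi * k * l * R) * ‖gam b k μ c‖
        - (Real.pi * k * t₀) * ‖gam b k μ c‖ ^ 2) := by
  rw [norm_thetaTerm, ← Real.exp_add]
  apply Real.exp_le_exp.mpr
  set γ := gam b k μ c with hγ
  set r := ‖γ‖ with hr
  have hr0 : 0 ≤ r := norm_nonneg _
  have hq : ⟪γ, γ⟫_ℝ = r ^ 2 := real_inner_self_eq_norm_sq γ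
  have hqμ : ⟪μ, μ⟫_ℝ = ‖μ‖ ^ 2 := real_inner_self_eq_norm_sq μ
  have hR : 0 ≤ R := le_trans (norm_nonneg v) hv
  have hwim : |(cbil (toC γ) v).im| ≤ (l : ℝ) * r * R := by
    calc |(cbil (toC γ) v).im| ≤ ‖cbil (toC γ) v‖ := Complex.abs_im_le_norm _
      _ ≤ (l : ℝ) * r * R := by
          refine le_trans (abs_cbil_le γ v) ?_
          have : (0:ℝ) ≤ (l : ℝ) * r := by positivity
          nlinarith
  have hπ := Real.pi_pos
  have hk' : (0:ℝ) < k := by exact_mod_cast hk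
  rw [hq, hqμ]
  have f1 : -(2 * Real.pi * k * (cbil (toC γ) v).im) ≤ 2 * Real.pi * k * ((l:ℝ) * r * R) := by
    have hb : -(cbil (toC γ) v).im ≤ (l:ℝ) * r * R := le_trans (neg_le_abs _) hwim
    have := mul_le_mul_of_nonneg_left hb (by positivity : (0:ℝ) ≤ 2 * Real.pi * k)
    linarith
  have f2 : Real.pi * k * r ^ 2 * t₀ ≤ Real.pi * k * r ^ 2 * τ.im := by
    have := mul_le_mul_of_nonneg_left h1 (by positivity : (0:ℝ) ≤ Real.pi * k * r ^ 2)
    linarith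
  have f3 : Real.pi * ‖μ‖ ^ 2 / k * τ.im ≤ Real.pi * ‖μ‖ ^ 2 / k * T := by
    have := mul_le_mul_of_nonneg_left h2 (by positivity : (0:ℝ) ≤ Real.pi * ‖μ‖ ^ 2 / k)
    linarith
  linarith

-- copy from earlier verified pieces
lemma repr_gam {l : ℕ} (b : Module.Basis (Fin l) ℝ (Evec l)) (k : ℕ) (μ : Evec l)
    (c : Fin l → ℤ) (i : Fin l) :
    b.repr (gam b k μ c) i = (k:ℝ)⁻¹ * b.repr μ i + c i := by
  have : b.repr (∑ j, (c j : ℝ) • b j) i = c i := by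
    rw [map_sum]
    simp [Finsupp.single_apply, Module.Basis.repr_self]
  rw [gam, map_add, map_smul]
  push_cast
  simp only [Finsupp.coe_add, Finsupp.coe_smul, Pi.add_apply, Pi.smul_apply, smul_eq_mul]
  rw [← this]
  norm_num

lemma coord_sum_bound {l : ℕ} (b : Module.Basis (Fin l) ℝ (Evec l)) (k : ℕ) (μ : Evec l) :
    ∃ a d : ℝ, 0 ≤ a ∧ 0 ≤ d ∧ ∀ c : Fin l → ℤ,
      (∑ i, |(c i : ℝ)|) ≤ a * ‖gam b k μ c‖ + d := by
  set T := fun i => LinearMap.toContinuousLinearMap (b.coord i) with hT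
  refine ⟨∑ i, ‖T i‖, ∑ i, |(k:ℝ)⁻¹ * b.repr μ i|, by positivity, by positivity, fun c => ?_⟩
  rw [Finset.sum_mul, ← Finset.sum_add_distrib]
  refine Finset.sum_le_sum fun i _ => ?_
  have h1 : (c i : ℝ) = b.repr (gam b k μ c) i - (k:ℝ)⁻¹ * b.repr μ i := by
    rw [repr_gam]; ring
  have h2 : |b.repr (gam b k μ c) i| ≤ ‖T i‖ * ‖gam b k μ c‖ := by
    have := (T i).le_opNorm (gam b k μ c)
    simpa [hT, Real.norm_eq_abs, Module.Basis.coord_apply] using this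
  calc |(c i : ℝ)| ≤ |b.repr (gam b k μ c) i| + |(k:ℝ)⁻¹ * b.repr μ i| := by
        rw [h1]; exact abs_sub _ _
    _ ≤ ‖T i‖ * ‖gam b k μ c‖ + |(k:ℝ)⁻¹ * b.repr μ i| := by linarith

lemma summable_exp_neg_abs_int : Summable (fun m : ℤ => Real.exp (-|(m : ℝ)|)) := by
  have hgeo : Summable (fun n : ℕ => Real.exp (-1) ^ n) :=
    summable_geometric_of_lt_one (Real.exp_pos _).le
      (Real.exp_lt_one_iff.mpr (by norm_num))
  have h : ∀ n : ℕ, Real.exp (-|(n : ℝ)|) = (Real.exp (-1)) ^ n := by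
    intro n
    rw [_root_.abs_of_nonneg (by positivity), ← Real.exp_nat_mul]
    ring_nf
  apply Summable.of_nat_of_neg
  · exact hgeo.congr fun n => (h n).symm
  · refine hgeo.congr fun n => ?_
    rw [← h n]; push_cast; rw [abs_neg]

lemma summable_prod_exp_neg_abs : ∀ l : ℕ,
    Summable (fun c : Fin l → ℤ => ∏ i, Real.exp (-|(c i : ℝ)|))
  | 0 => by
      simp only [Finset.univ_eq_empty, Finset.prod_empty]
      exact summable_of_finite_support (Set.toFinite _)
  | (n+1) => by
      have hmul := summable_exp_neg_abs_int.mul_of_nonneg (summable_prod_exp_neg_abs n)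
        (fun m => (Real.exp_pos _).le)
        (fun c => Finset.prod_nonneg fun i _ => (Real.exp_pos _).le)
      rw [← (Fin.consEquiv (fun _ : Fin (n+1) => ℤ)).summable_iff]
      refine hmul.congr fun p => ?_
      simp [Fin.consEquiv, Fin.prod_univ_succ]

lemma summable_aux {l : ℕ} (b : Module.Basis (Fin l) ℝ (Evec l)) (k : ℕ) (μ : Evec l)
    (A B : ℝ) (hB : 0 < B) :
    Summable (fun c : Fin l → ℤ =>
      Real.exp (A * ‖gam b k μ c‖ - B * ‖gam b k μ c‖ ^ 2)) := by
  obtain ⟨a, d, ha, hd, hbound⟩ := coord_sum_bound b k μ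
  refine Summable.of_nonneg_of_le (fun c => (Real.exp_pos _).le) (fun c => ?_)
    (((summable_prod_exp_neg_abs l).mul_left (Real.exp ((A + a) ^ 2 / (4 * B) + d))))
  have hprod : (∏ i, Real.exp (-|(c i : ℝ)|)) = Real.exp (-(∑ i, |(c i : ℝ)|)) := by
    rw [← Real.exp_sum]; congr 1; rw [← Finset.sum_neg_distrib]
  rw [hprod, ← Real.exp_add]
  apply Real.exp_le_exp.mpr
  set r := ‖gam b k μ c‖ with hr
  have hr0 : 0 ≤ r := norm_nonneg _
  have hS := hbound c
  set S := ∑ i, |(c i : ℝ)| with hS'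
  rw [← hr] at hS
  have hdiv : (A + a) ^ 2 / (4 * B) * (4 * B) = (A + a) ^ 2 :=
    div_mul_cancel₀ _ (by positivity)
  have key : (A + a) * r - B * r ^ 2 ≤ (A + a) ^ 2 / (4 * B) := by
    nlinarith [sq_nonneg (2 * B * r - (A + a)), hB]
  linarith

/-- Summability from a polynomial-times-gaussian bound. -/
lemma summable_of_poly_bound {l : ℕ} (b : Module.Basis (Fin l) ℝ (Evec l)) (k : ℕ) (μ : Evec l)
    {W : Type*} [NormedAddCommGroup W] [CompleteSpace W]
    (P A B : ℝ) (hP : 0 ≤ P) (hB : 0 < B) (u : (Fin l → ℤ) → W)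
    (hu : ∀ c, ‖u c‖ ≤ P * (1 + ‖gam b k μ c‖ ^ 2) *
      Real.exp (A * ‖gam b k μ c‖ - B * ‖gam b k μ c‖ ^ 2)) :
    Summable u := by
  refine Summable.of_norm_bounded ?_ hu
  refine Summable.of_nonneg_of_le (fun c => by positivity) (fun c => ?_)
    ((summable_aux b k μ (A + 2) B hB).mul_left (2 * P))
  set r := ‖gam b k μ c‖ with hr
  have hr0 : 0 ≤ r := norm_nonneg _
  have e1 : (1:ℝ) ≤ Real.exp (2 * r) := Real.one_le_exp (by positivity)
  have e2 : r ^ 2 ≤ Real.exp (2 * r) := by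
    have h := Real.add_one_le_exp r
    have : r ^ 2 ≤ (Real.exp r) ^ 2 := by nlinarith [Real.exp_pos r]
    calc r ^ 2 ≤ (Real.exp r) ^ 2 := this
      _ = Real.exp (r + r) := by rw [Real.exp_add]; ring
      _ = Real.exp (2 * r) := by ring_nf
  have : (1 + r ^ 2) ≤ 2 * Real.exp (2 * r) := by linarith
  calc P * (1 + r ^ 2) * Real.exp (A * r - B * r ^ 2)
      ≤ P * (2 * Real.exp (2 * r)) * Real.exp (A * r - B * r ^ 2) := by
        have hE := (Real.exp_pos (A * r - B * r ^ 2)).le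
        exact mul_le_mul_of_nonneg_right (mul_le_mul_of_nonneg_left this hP) hE
    _ = 2 * P * (Real.exp (2 * r) * Real.exp (A * r - B * r ^ 2)) := by ring
    _ = 2 * P * Real.exp ((A + 2) * r - B * r ^ 2) := by
        rw [← Real.exp_add]; congr 1; ring

/-- coefficient for τ-differentiation -/
def dcoef {l : ℕ} (b : Module.Basis (Fin l) ℝ (Evec l)) (k : ℕ) (μ : Evec l)
    (c : Fin l → ℤ) : ℂ :=
  (Real.pi : ℂ) * Complex.I * k * (⟪gam b k μ c, gam b k μ c⟫_ℝ : ℂ)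
    - (Real.pi : ℂ) * Complex.I / k * (⟪μ, μ⟫_ℝ : ℂ)

/-- coefficient for differentiation in direction `e_j` -/
def mcoef {l : ℕ} (b : Module.Basis (Fin l) ℝ (Evec l)) (k : ℕ) (μ : Evec l)
    (j : Fin l) (c : Fin l → ℤ) : ℂ :=
  2 * (Real.pi : ℂ) * Complex.I * k * ((gam b k μ c j : ℝ) : ℂ)

lemma norm_dcoef_le {l : ℕ} (b : Module.Basis (Fin l) ℝ (Evec l)) (k : ℕ) (hk : 0 < k) (μ : Evec l)
    (c : Fin l → ℤ) :
    ‖dcoef b k μ c‖ ≤ (Real.pi * k + Real.pi * ‖μ‖ ^ 2 / k) * (1 + ‖gam b k μ c‖ ^ 2) := by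
  have hk' : (0:ℝ) < k := by exact_mod_cast hk
  have hπ := Real.pi_pos
  set r := ‖gam b k μ c‖ with hr
  have hr0 : 0 ≤ r := norm_nonneg _
  have hq : ⟪gam b k μ c, gam b k μ c⟫_ℝ = r ^ 2 := real_inner_self_eq_norm_sq _
  have hqμ : ⟪μ, μ⟫_ℝ = ‖μ‖ ^ 2 := real_inner_self_eq_norm_sq μ
  have h1 : ‖(Real.pi : ℂ) * Complex.I * k * ((⟪gam b k μ c, gam b k μ c⟫_ℝ : ℝ) : ℂ)‖
      = Real.pi * k * r ^ 2 := by
    rw [hq]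
    simp [norm_mul, Complex.norm_real, abs_of_pos hπ, abs_of_pos hk']
  have h2 : ‖(Real.pi : ℂ) * Complex.I / (k : ℂ) * ((⟪μ, μ⟫_ℝ : ℝ) : ℂ)‖
      = Real.pi / k * ‖μ‖ ^ 2 := by
    rw [hqμ]
    simp [norm_mul, norm_div, Complex.norm_real, abs_of_pos hπ, abs_of_pos hk']
  calc ‖dcoef b k μ c‖ ≤ Real.pi * k * r ^ 2 + Real.pi / k * ‖μ‖ ^ 2 := by
        rw [dcoef]
        refine le_trans (norm_sub_le _ _) ?_
        rw [h1, h2]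
    _ ≤ (Real.pi * k + Real.pi * ‖μ‖ ^ 2 / k) * (1 + r ^ 2) := by
        have h3 : (0:ℝ) ≤ (Real.pi * ‖μ‖ ^ 2 / k) * r ^ 2 :=
          mul_nonneg (div_nonneg (mul_nonneg hπ.le (sq_nonneg _)) hk'.le) (sq_nonneg r)
        have h4 : (0:ℝ) < Real.pi * k := mul_pos hπ hk'
        have h5 : Real.pi / k * ‖μ‖ ^ 2 = Real.pi * ‖μ‖ ^ 2 / k := by ring
        nlinarith [sq_nonneg r]

lemma norm_mcoef_le {l : ℕ} (b : Module.Basis (Fin l) ℝ (Evec l)) (k : ℕ) (μ : Evec l)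
    (j : Fin l) (c : Fin l → ℤ) :
    ‖mcoef b k μ j c‖ ≤ 2 * Real.pi * k * ‖gam b k μ c‖ := by
  have hπ := Real.pi_pos
  rw [mcoef]
  have : ‖2 * (Real.pi : ℂ) * Complex.I * (k:ℂ) * ((gam b k μ c j : ℝ) : ℂ)‖
      = 2 * Real.pi * k * |gam b k μ c j| := by
    simp [norm_mul, Complex.norm_real, abs_of_pos hπ]
  rw [this]
  have h := mul_le_mul_of_nonneg_left (coord_le_norm_R (gam b k μ c) j)
    (by positivity : (0:ℝ) ≤ 2 * Real.pi * k)
  linarith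

lemma thetaTerm_hasDerivAt_tau {l : ℕ} (b : Module.Basis (Fin l) ℝ (Evec l)) (k : ℕ) (μ : Evec l)
    (v : EvecC l) (c : Fin l → ℤ) (τ : ℂ) :
    HasDerivAt (fun τ' => thetaTerm b k μ τ' v c)
      (dcoef b k μ c * thetaTerm b k μ τ v c) τ := by
  have h : ∀ τ' : ℂ, thetaTerm b k μ τ' v c
      = Complex.exp (2 * (Real.pi : ℂ) * Complex.I * k * cbil (toC (gam b k μ c)) v
        + dcoef b k μ c * τ') := by
    intro τ'; rw [thetaTerm, dcoef]; congr 1; ring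
  simp_rw [h]
  have h2 := (((hasDerivAt_id τ).const_mul (dcoef b k μ c)).const_add
    (2 * (Real.pi : ℂ) * Complex.I * k * cbil (toC (gam b k μ c)) v)).cexp
  simp only [id_eq, mul_one] at h2
  have key : dcoef b k μ c * Complex.exp (2 * (Real.pi : ℂ) * Complex.I * k *
      cbil (toC (gam b k μ c)) v + dcoef b k μ c * τ)
      = Complex.exp (2 * (Real.pi : ℂ) * Complex.I * k * cbil (toC (gam b k μ c)) v
        + dcoef b k μ c * τ) * dcoef b k μ c := by ring
  rw [key]
  exact h2

lemma cbil_add_smul_single {l : ℕ} (g v : EvecC l) (t : ℂ) (j : Fin l) :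
    cbil g (v + t • EuclideanSpace.single j (1:ℂ)) = cbil g v + t * g j := by
  simp only [cbil]
  have h : ∀ i, g i * (v + t • EuclideanSpace.single j (1:ℂ)) i
      = g i * v i + (if j = i then t * g i else 0) := by
    intro i
    have hv : (v + t • EuclideanSpace.single j (1:ℂ)) i
        = v i + t * (if j = i then 1 else 0) := by
      simp [EuclideanSpace.single_apply, eq_comm]
    rw [hv]
    by_cases hij : j = i <;> simp [hij] <;> ring
  simp_rw [h]
  rw [Finset.sum_add_distrib,
    Finset.sum_ite_eq (Finset.univ : Finset (Fin l)) j (fun i => t * g i)]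
  simp

lemma thetaTerm_dir_eq {l : ℕ} (b : Module.Basis (Fin l) ℝ (Evec l)) (k : ℕ) (μ : Evec l)
    (τ : ℂ) (v : EvecC l) (j : Fin l) (c : Fin l → ℤ) (t : ℂ) :
    thetaTerm b k μ τ (v + t • EuclideanSpace.single j (1:ℂ)) c
      = Complex.exp ((2 * (Real.pi : ℂ) * Complex.I * k * cbil (toC (gam b k μ c)) v
        + (Real.pi : ℂ) * Complex.I * k * τ * (⟪gam b k μ c, gam b k μ c⟫_ℝ : ℂ)
        - (Real.pi : ℂ) * Complex.I * τ / k * (⟪μ, μ⟫_ℝ : ℂ)) + mcoef b k μ j c * t) := by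
  rw [thetaTerm, cbil_add_smul_single, mcoef]
  congr 1
  have : toC (gam b k μ c) j = ((gam b k μ c j : ℝ) : ℂ) := rfl
  rw [this]
  ring

lemma thetaTerm_hasDerivAt_dir {l : ℕ} (b : Module.Basis (Fin l) ℝ (Evec l)) (k : ℕ) (μ : Evec l)
    (τ : ℂ) (v : EvecC l) (j : Fin l) (c : Fin l → ℤ) (t : ℂ) :
    HasDerivAt (fun s : ℂ => thetaTerm b k μ τ (v + s • EuclideanSpace.single j (1:ℂ)) c)
      (mcoef b k μ j c * thetaTerm b k μ τ (v + t • EuclideanSpace.single j (1:ℂ)) c) t := by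
  simp_rw [thetaTerm_dir_eq]
  set a := (2 * (Real.pi : ℂ) * Complex.I * k * cbil (toC (gam b k μ c)) v
        + (Real.pi : ℂ) * Complex.I * k * τ * (⟪gam b k μ c, gam b k μ c⟫_ℝ : ℂ)
        - (Real.pi : ℂ) * Complex.I * τ / k * (⟪μ, μ⟫_ℝ : ℂ)) with ha
  have h2 := (((hasDerivAt_id t).const_mul (mcoef b k μ j c)).const_add a).cexp
  simp only [id_eq, mul_one] at h2
  have key : mcoef b k μ j c * Complex.exp (a + mcoef b k μ j c * t)
      = Complex.exp (a + mcoef b k μ j c * t) * mcoef b k μ j c := by ring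
  rw [key]
  exact h2

-- continuous linear functional for cbil
def cbilCLM {l : ℕ} (g : EvecC l) : EvecC l →L[ℂ] ℂ := ∑ i, g i • EuclideanSpace.proj i

lemma cbilCLM_apply {l : ℕ} (g v : EvecC l) : cbilCLM g v = cbil g v := by
  simp [cbilCLM, cbil, ContinuousLinearMap.sum_apply, smul_eq_mul]

lemma norm_cbilCLM_le {l : ℕ} (g : EvecC l) : ‖cbilCLM g‖ ≤ (l : ℝ) * ‖g‖ := by
  refine ContinuousLinearMap.opNorm_le_bound _ (by positivity) fun v => ?_
  rw [cbilCLM_apply]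
  calc ‖cbil g v‖ ≤ ∑ i, ‖g i * v i‖ := norm_sum_le _ _
    _ ≤ ∑ i : Fin l, ‖g‖ * ‖v‖ := by
        refine Finset.sum_le_sum fun i _ => ?_
        rw [norm_mul]
        exact mul_le_mul (coord_le_norm_C g i) (coord_le_norm_C v i)
          (norm_nonneg _) (norm_nonneg _)
    _ = (l : ℝ) * ‖g‖ * ‖v‖ := by
        rw [Finset.sum_const, Finset.card_univ, Fintype.card_fin]; ring

lemma thetaTerm_hasFDerivAt_v {l : ℕ} (b : Module.Basis (Fin l) ℝ (Evec l)) (k : ℕ) (μ : Evec l)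
    (τ : ℂ) (c : Fin l → ℤ) (v : EvecC l) :
    HasFDerivAt (fun w => thetaTerm b k μ τ w c)
      (thetaTerm b k μ τ v c •
        ((2 * (Real.pi : ℂ) * Complex.I * k) • cbilCLM (toC (gam b k μ c)))) v := by
  have h : ∀ w, thetaTerm b k μ τ w c
      = Complex.exp (((2 * (Real.pi : ℂ) * Complex.I * k) • cbilCLM (toC (gam b k μ c))) w
        + ((Real.pi : ℂ) * Complex.I * k * τ * (⟪gam b k μ c, gam b k μ c⟫_ℝ : ℂ)
          - (Real.pi : ℂ) * Complex.I * τ / k * (⟪μ, μ⟫_ℝ : ℂ))) := by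
    intro w
    rw [thetaTerm]
    congr 1
    rw [ContinuousLinearMap.smul_apply, cbilCLM_apply, smul_eq_mul]
    ring
  simp_rw [h]
  have h2 := ((((2 * (Real.pi : ℂ) * Complex.I * k) •
    cbilCLM (toC (gam b k μ c))).hasFDerivAt (x := v)).add_const
    ((Real.pi : ℂ) * Complex.I * k * τ * (⟪gam b k μ c, gam b k μ c⟫_ℝ : ℂ)
      - (Real.pi : ℂ) * Complex.I * τ / k * (⟪μ, μ⟫_ℝ : ℂ))).cexp
  exact h2

lemma tsum_hasFDerivAt {ι E : Type*} [Nonempty ι] [NormedAddCommGroup E] [NormedSpace ℂ E]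
    (F : ι → E → ℂ) (F' : ι → E → (E →L[ℂ] ℂ)) (u w : ι → ℝ)
    (hu : Summable u) (hw : Summable w) {s : Set E} (hs : IsOpen s)
    (hF : ∀ c, ∀ x ∈ s, HasFDerivAt (F c) (F' c x) x)
    (hbF : ∀ c, ∀ x ∈ s, ‖F c x‖ ≤ w c)
    (hbF' : ∀ c, ∀ x ∈ s, ‖F' c x‖ ≤ u c)
    {x : E} (hx : x ∈ s) :
    HasFDerivAt (fun y => ∑' c, F c y) (∑' c, F' c x) x := by
  refine hasFDerivAt_of_tendstoUniformlyOn hs (tendstoUniformlyOn_tsum hu hbF')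
    (fun t y hy => HasFDerivAt.sum fun c _ => hF c y hy) (fun y hy => ?_) hx
  simp only [Finset.sum_apply]
  exact (Summable.of_norm_bounded hw (fun c => hbF c y hy)).hasSum

lemma tsum_hasDerivAt {ι : Type*} [Nonempty ι]
    (F : ι → ℂ → ℂ) (F' : ι → ℂ → ℂ) (u w : ι → ℝ)
    (hu : Summable u) (hw : Summable w) {s : Set ℂ} (hs : IsOpen s)
    (hF : ∀ c, ∀ x ∈ s, HasDerivAt (F c) (F' c x) x)
    (hbF : ∀ c, ∀ x ∈ s, ‖F c x‖ ≤ w c)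
    (hbF' : ∀ c, ∀ x ∈ s, ‖F' c x‖ ≤ u c)
    {x : ℂ} (hx : x ∈ s) :
    HasDerivAt (fun y => ∑' c, F c y) (∑' c, F' c x) x := by
  refine hasDerivAt_of_tendstoUniformlyOn hs (tendstoUniformlyOn_tsum hu hbF')
    (Eventually.of_forall fun t y hy => HasDerivAt.sum fun c _ => hF c y hy)
    (fun y hy => ?_) hx
  simp only [Finset.sum_apply]
  exact (Summable.of_norm_bounded hw (fun c => hbF c y hy)).hasSum

/-- the standard polynomial-gaussian bound family -/
def pb {l : ℕ} (b : Module.Basis (Fin l) ℝ (Evec l)) (k : ℕ) (μ : Evec l)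
    (P A B : ℝ) (c : Fin l → ℤ) : ℝ :=
  P * ((1 + ‖gam b k μ c‖ ^ 2) * Real.exp (A * ‖gam b k μ c‖ - B * ‖gam b k μ c‖ ^ 2))

lemma summable_pb {l : ℕ} (b : Module.Basis (Fin l) ℝ (Evec l)) (k : ℕ) (μ : Evec l)
    (P A B : ℝ) (hP : 0 ≤ P) (hB : 0 < B) : Summable (pb b k μ P A B) := by
  refine summable_of_poly_bound b k μ P A B hP hB _ fun c => ?_
  rw [Real.norm_eq_abs, pb, _root_.abs_of_nonneg (mul_nonneg hP (by positivity))]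
  exact le_of_eq (by ring)

/-- bound `‖thetaTerm‖ ≤ pb E A B` on the region. -/
lemma norm_thetaTerm_le_pb {l : ℕ} (b : Module.Basis (Fin l) ℝ (Evec l)) (k : ℕ) (hk : 0 < k)
    (μ : Evec l) {t₀ T R : ℝ} (ht0 : 0 < t₀) {τ : ℂ} (h1 : t₀ ≤ τ.im) (h2 : τ.im ≤ T)
    {v : EvecC l} (hv : ‖v‖ ≤ R) (c : Fin l → ℤ) :
    ‖thetaTerm b k μ τ v c‖ ≤
      pb b k μ (Real.exp (Real.pi * ‖μ‖ ^ 2 / k * T)) (2 * Real.pi * k * l * R)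
        (Real.pi * k * t₀) c := by
  refine le_trans (norm_thetaTerm_le b k hk μ ht0 h1 h2 hv c) ?_
  rw [pb]
  have h3 : (0:ℝ) < Real.exp (Real.pi * ‖μ‖ ^ 2 / k * T) := Real.exp_pos _
  have h4 : (0:ℝ) < Real.exp ((2 * Real.pi * k * l * R) * ‖gam b k μ c‖
      - (Real.pi * k * t₀) * ‖gam b k μ c‖ ^ 2) := Real.exp_pos _
  nlinarith [sq_nonneg ‖gam b k μ c‖, mul_nonneg (mul_nonneg h3.le
    (sq_nonneg ‖gam b k μ c‖)) h4.le]

/-- bound `‖K c * thetaTerm‖ ≤ pb (Q*E) A B` when `‖K c‖ ≤ Q * (1 + r^2)`. -/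
lemma norm_mul_thetaTerm_le_pb {l : ℕ} (b : Module.Basis (Fin l) ℝ (Evec l)) (k : ℕ) (hk : 0 < k)
    (μ : Evec l) {t₀ T R : ℝ} (ht0 : 0 < t₀) {τ : ℂ} (h1 : t₀ ≤ τ.im) (h2 : τ.im ≤ T)
    {v : EvecC l} (hv : ‖v‖ ≤ R) (c : Fin l → ℤ) {K : ℂ} {Q : ℝ}
    (hK : ‖K‖ ≤ Q * (1 + ‖gam b k μ c‖ ^ 2)) :
    ‖K * thetaTerm b k μ τ v c‖ ≤
      pb b k μ (Q * Real.exp (Real.pi * ‖μ‖ ^ 2 / k * T)) (2 * Real.pi * k * l * R)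
        (Real.pi * k * t₀) c := by
  rw [norm_mul, pb]
  have hterm := norm_thetaTerm_le b k hk μ ht0 h1 h2 hv c
  have hQ : 0 ≤ Q * (1 + ‖gam b k μ c‖ ^ 2) := le_trans (norm_nonneg K) hK
  have hQ' : (0:ℝ) ≤ Q := by nlinarith [sq_nonneg ‖gam b k μ c‖]
  calc ‖K‖ * ‖thetaTerm b k μ τ v c‖
      ≤ (Q * (1 + ‖gam b k μ c‖ ^ 2)) *
        (Real.exp (Real.pi * ‖μ‖ ^ 2 / k * T) *
          Real.exp ((2 * Real.pi * k * l * R) * ‖gam b k μ c‖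
            - (Real.pi * k * t₀) * ‖gam b k μ c‖ ^ 2)) :=
        mul_le_mul hK hterm (norm_nonneg _) hQ
    _ = _ := by ring

lemma theta_hasDerivAt_tau {l : ℕ} (b : Module.Basis (Fin l) ℝ (Evec l)) (k : ℕ) (hk : 0 < k)
    (μ : Evec l) {τ : ℂ} (hτ : 0 < τ.im) (v : EvecC l) :
    HasDerivAt (fun τ' => theta b k μ τ' v)
      (∑' c, dcoef b k μ c * thetaTerm b k μ τ v c) τ := by
  have hk' : (0:ℝ) < k := by exact_mod_cast hk
  have hπ := Real.pi_pos
  have ht0 : 0 < τ.im / 2 := by linarith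
  have hball : ∀ τ' ∈ Metric.ball τ (τ.im / 2), τ.im / 2 ≤ τ'.im ∧ τ'.im ≤ 2 * τ.im := by
    intro τ' hτ'
    rw [Metric.mem_ball, Complex.dist_eq] at hτ'
    have him : |τ'.im - τ.im| ≤ ‖τ' - τ‖ := by
      have := Complex.abs_im_le_norm (τ' - τ)
      simpa using this
    rw [abs_le] at him
    constructor <;> linarith [him.1, him.2, hτ'.le]
  set A := 2 * Real.pi * k * l * ‖v‖ with hA
  set B := Real.pi * k * (τ.im / 2) with hB
  have hB0 : 0 < B := by rw [hB]; positivity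
  set E := Real.exp (Real.pi * ‖μ‖ ^ 2 / k * (2 * τ.im)) with hE
  set Q := Real.pi * k + Real.pi * ‖μ‖ ^ 2 / k with hQ
  have hQ0 : 0 ≤ Q := by rw [hQ]; positivity
  have hE0 : 0 ≤ E := (Real.exp_pos _).le
  refine tsum_hasDerivAt (fun c τ' => thetaTerm b k μ τ' v c)
    (fun c τ' => dcoef b k μ c * thetaTerm b k μ τ' v c)
    (pb b k μ (Q * E) A B) (pb b k μ E A B)
    (summable_pb b k μ _ A B (mul_nonneg hQ0 hE0) hB0)
    (summable_pb b k μ E A B hE0 hB0)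
    Metric.isOpen_ball
    (fun c τ' _ => thetaTerm_hasDerivAt_tau b k μ v c τ')
    (fun c τ' hτ' => norm_thetaTerm_le_pb b k hk μ ht0 (hball τ' hτ').1 (hball τ' hτ').2
      (le_refl ‖v‖) c)
    (fun c τ' hτ' => norm_mul_thetaTerm_le_pb b k hk μ ht0 (hball τ' hτ').1 (hball τ' hτ').2
      (le_refl ‖v‖) c (norm_dcoef_le b k hk μ c))
    (Metric.mem_ball_self ht0)

lemma theta_hasFDerivAt_v {l : ℕ} (b : Module.Basis (Fin l) ℝ (Evec l)) (k : ℕ) (hk : 0 < k)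
    (μ : Evec l) {τ : ℂ} (hτ : 0 < τ.im) (v₀ : EvecC l) :
    HasFDerivAt (fun v => theta b k μ τ v)
      (∑' c, thetaTerm b k μ τ v₀ c •
        ((2 * (Real.pi : ℂ) * Complex.I * k) • cbilCLM (toC (gam b k μ c)))) v₀ := by
  have hk' : (0:ℝ) < k := by exact_mod_cast hk
  have hπ := Real.pi_pos
  have hball : ∀ w ∈ Metric.ball v₀ 1, ‖w‖ ≤ ‖v₀‖ + 1 := by
    intro w hw
    rw [Metric.mem_ball] at hw
    have := norm_le_norm_add_norm_sub' w v₀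
    rw [← dist_eq_norm] at this
    linarith [this, hw.le]
  set A := 2 * Real.pi * k * l * (‖v₀‖ + 1) with hA
  set B := Real.pi * k * τ.im with hB
  have hB0 : 0 < B := by rw [hB]; positivity
  set E := Real.exp (Real.pi * ‖μ‖ ^ 2 / k * τ.im) with hE
  set Q := 2 * Real.pi * k * l with hQ
  have hQ0 : 0 ≤ Q := by rw [hQ]; positivity
  have hE0 : 0 ≤ E := (Real.exp_pos _).le
  refine tsum_hasFDerivAt (fun c w => thetaTerm b k μ τ w c)
    (fun c w => thetaTerm b k μ τ w c •
      ((2 * (Real.pi : ℂ) * Complex.I * k) • cbilCLM (toC (gam b k μ c))))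
    (pb b k μ (Q * E) A B) (pb b k μ E A B)
    (summable_pb b k μ _ A B (mul_nonneg hQ0 hE0) hB0)
    (summable_pb b k μ E A B hE0 hB0)
    Metric.isOpen_ball
    (fun c w _ => thetaTerm_hasFDerivAt_v b k μ τ c w)
    (fun c w hw => norm_thetaTerm_le_pb b k hk μ hτ (le_refl τ.im) (le_refl τ.im)
      (hball w hw) c)
    (fun c w hw => ?_)
    (Metric.mem_ball_self one_pos)
  -- bound on the Fréchet derivative term
  show ‖thetaTerm b k μ τ w c •
      ((2 * (Real.pi : ℂ) * Complex.I * (k:ℂ)) • cbilCLM (toC (gam b k μ c)))‖ ≤ _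
  rw [norm_smul (thetaTerm b k μ τ w c)
    ((2 * (Real.pi : ℂ) * Complex.I * (k:ℂ)) • cbilCLM (toC (gam b k μ c)))]
  have hL : ‖(2 * (Real.pi : ℂ) * Complex.I * (k:ℂ)) • cbilCLM (toC (gam b k μ c))‖
      ≤ Q * (1 + ‖gam b k μ c‖ ^ 2) := by
    rw [norm_smul (2 * (Real.pi : ℂ) * Complex.I * (k:ℂ)) (cbilCLM (toC (gam b k μ c)))]
    have h1 : ‖(2 * (Real.pi : ℂ) * Complex.I * (k:ℂ))‖ = 2 * Real.pi * k := by
      simp [norm_mul, abs_of_pos hπ]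
    have h2 : ‖cbilCLM (toC (gam b k μ c))‖ ≤ (l:ℝ) * ‖gam b k μ c‖ := by
      have h3 : ‖toC (gam b k μ c)‖ = ‖gam b k μ c‖ := by
        rw [EuclideanSpace.norm_eq, EuclideanSpace.norm_eq]
        congr 1
        refine Finset.sum_congr rfl fun i _ => ?_
        rw [toC]; simp
      calc ‖cbilCLM (toC (gam b k μ c))‖ ≤ (l:ℝ) * ‖toC (gam b k μ c)‖ :=
            norm_cbilCLM_le _
        _ = (l:ℝ) * ‖gam b k μ c‖ := by rw [h3]
    rw [h1]
    set r := ‖gam b k μ c‖ with hr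
    have hr0 : (0:ℝ) ≤ r := norm_nonneg _
    have hrr : r ≤ 1 + r ^ 2 := by nlinarith [sq_nonneg (r - 1)]
    calc 2 * Real.pi * k * ‖cbilCLM (toC (gam b k μ c))‖
        ≤ 2 * Real.pi * k * ((l:ℝ) * r) :=
          mul_le_mul_of_nonneg_left h2 (by positivity)
      _ ≤ Q * (1 + r ^ 2) := by
          rw [hQ]
          have : (0:ℝ) ≤ 2 * Real.pi * k * l := by positivity
          nlinarith
  have hterm := norm_thetaTerm_le b k hk μ hτ (le_refl τ.im) (le_refl τ.im) (hball w hw) c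
  rw [pb]
  calc ‖thetaTerm b k μ τ w c‖ * ‖(2 * (Real.pi:ℂ) * Complex.I * (k:ℂ)) •
      cbilCLM (toC (gam b k μ c))‖
      ≤ (E * Real.exp (A * ‖gam b k μ c‖ - B * ‖gam b k μ c‖ ^ 2)) *
        (Q * (1 + ‖gam b k μ c‖ ^ 2)) := by
        refine mul_le_mul ?_ hL (norm_nonneg _) (by positivity)
        calc ‖thetaTerm b k μ τ w c‖ ≤ _ := hterm
          _ = E * Real.exp (A * ‖gam b k μ c‖ - B * ‖gam b k μ c‖ ^ 2) := by
            rw [hE, hA, hB]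
    _ = Q * E * ((1 + ‖gam b k μ c‖ ^ 2) *
        Real.exp (A * ‖gam b k μ c‖ - B * ‖gam b k μ c‖ ^ 2)) := by ring

lemma norm_add_smul_single_le {l : ℕ} (v : EvecC l) (j : Fin l) {t : ℂ}
    (ht : t ∈ Metric.ball (0:ℂ) 1) :
    ‖v + t • EuclideanSpace.single j (1:ℂ)‖ ≤ ‖v‖ + 1 := by
  rw [Metric.mem_ball, dist_zero_right] at ht
  calc ‖v + t • EuclideanSpace.single j (1:ℂ)‖
      ≤ ‖v‖ + ‖t • EuclideanSpace.single j (1:ℂ)‖ := norm_add_le _ _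
    _ ≤ ‖v‖ + 1 := by
        rw [norm_smul, EuclideanSpace.norm_single]
        have : ‖t‖ * ‖(1:ℂ)‖ ≤ 1 := by simpa using ht.le
        linarith

lemma mcoef_poly_bound {l : ℕ} (b : Module.Basis (Fin l) ℝ (Evec l)) (k : ℕ) (μ : Evec l)
    (j : Fin l) (c : Fin l → ℤ) :
    ‖mcoef b k μ j c‖ ≤ (2 * Real.pi * k) * (1 + ‖gam b k μ c‖ ^ 2) := by
  have h := norm_mcoef_le b k μ j c
  have hπ := Real.pi_pos
  set r := ‖gam b k μ c‖ with hr
  have hr0 : (0:ℝ) ≤ r := norm_nonneg _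
  have hrr : r ≤ 1 + r ^ 2 := by nlinarith [sq_nonneg (r - 1)]
  have h2 := mul_le_mul_of_nonneg_left hrr (by positivity : (0:ℝ) ≤ 2 * Real.pi * k)
  linarith

lemma mcoef_sq_poly_bound {l : ℕ} (b : Module.Basis (Fin l) ℝ (Evec l)) (k : ℕ) (μ : Evec l)
    (j : Fin l) (c : Fin l → ℤ) :
    ‖mcoef b k μ j c * mcoef b k μ j c‖ ≤
      ((2 * Real.pi * k) ^ 2) * (1 + ‖gam b k μ c‖ ^ 2) := by
  have h := norm_mcoef_le b k μ j c
  have hπ := Real.pi_pos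
  set r := ‖gam b k μ c‖ with hr
  have hr0 : (0:ℝ) ≤ r := norm_nonneg _
  rw [norm_mul]
  have hm0 : (0:ℝ) ≤ ‖mcoef b k μ j c‖ := norm_nonneg _
  calc ‖mcoef b k μ j c‖ * ‖mcoef b k μ j c‖
      ≤ (2 * Real.pi * k * r) * (2 * Real.pi * k * r) := by nlinarith
    _ = (2 * Real.pi * k) ^ 2 * r ^ 2 := by ring
    _ ≤ (2 * Real.pi * k) ^ 2 * (1 + r ^ 2) := by nlinarith [sq_nonneg (2 * Real.pi * (k:ℝ))]

lemma theta_hasDerivAt_dir {l : ℕ} (b : Module.Basis (Fin l) ℝ (Evec l)) (k : ℕ) (hk : 0 < k)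
    (μ : Evec l) {τ : ℂ} (hτ : 0 < τ.im) (v : EvecC l) (j : Fin l) {t : ℂ}
    (ht : t ∈ Metric.ball (0:ℂ) 1) :
    HasDerivAt (fun s : ℂ => theta b k μ τ (v + s • EuclideanSpace.single j (1:ℂ)))
      (∑' c, mcoef b k μ j c *
        thetaTerm b k μ τ (v + t • EuclideanSpace.single j (1:ℂ)) c) t := by
  have hk' : (0:ℝ) < k := by exact_mod_cast hk
  have hπ := Real.pi_pos
  set A := 2 * Real.pi * k * l * (‖v‖ + 1) with hA
  set B := Real.pi * k * τ.im with hB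
  have hB0 : 0 < B := by rw [hB]; positivity
  set E := Real.exp (Real.pi * ‖μ‖ ^ 2 / k * τ.im) with hE
  have hE0 : 0 ≤ E := (Real.exp_pos _).le
  refine tsum_hasDerivAt
    (fun c s => thetaTerm b k μ τ (v + s • EuclideanSpace.single j (1:ℂ)) c)
    (fun c s => mcoef b k μ j c *
      thetaTerm b k μ τ (v + s • EuclideanSpace.single j (1:ℂ)) c)
    (pb b k μ ((2 * Real.pi * k) * E) A B) (pb b k μ E A B)
    (summable_pb b k μ _ A B (by positivity) hB0)
    (summable_pb b k μ E A B hE0 hB0)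
    Metric.isOpen_ball
    (fun c s _ => thetaTerm_hasDerivAt_dir b k μ τ v j c s)
    (fun c s hs => norm_thetaTerm_le_pb b k hk μ hτ (le_refl τ.im) (le_refl τ.im)
      (norm_add_smul_single_le v j hs) c)
    (fun c s hs => norm_mul_thetaTerm_le_pb b k hk μ hτ (le_refl τ.im) (le_refl τ.im)
      (norm_add_smul_single_le v j hs) c (mcoef_poly_bound b k μ j c))
    ht

lemma theta_hasDerivAt_dir2 {l : ℕ} (b : Module.Basis (Fin l) ℝ (Evec l)) (k : ℕ) (hk : 0 < k)
    (μ : Evec l) {τ : ℂ} (hτ : 0 < τ.im) (v : EvecC l) (j : Fin l) {t : ℂ}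
    (ht : t ∈ Metric.ball (0:ℂ) 1) :
    HasDerivAt (fun s : ℂ => ∑' c, mcoef b k μ j c *
        thetaTerm b k μ τ (v + s • EuclideanSpace.single j (1:ℂ)) c)
      (∑' c, mcoef b k μ j c * mcoef b k μ j c *
        thetaTerm b k μ τ (v + t • EuclideanSpace.single j (1:ℂ)) c) t := by
  have hk' : (0:ℝ) < k := by exact_mod_cast hk
  have hπ := Real.pi_pos
  set A := 2 * Real.pi * k * l * (‖v‖ + 1) with hA
  set B := Real.pi * k * τ.im with hB
  have hB0 : 0 < B := by rw [hB]; positivity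
  set E := Real.exp (Real.pi * ‖μ‖ ^ 2 / k * τ.im) with hE
  have hE0 : 0 ≤ E := (Real.exp_pos _).le
  refine tsum_hasDerivAt
    (fun c s => mcoef b k μ j c *
      thetaTerm b k μ τ (v + s • EuclideanSpace.single j (1:ℂ)) c)
    (fun c s => mcoef b k μ j c * mcoef b k μ j c *
      thetaTerm b k μ τ (v + s • EuclideanSpace.single j (1:ℂ)) c)
    (pb b k μ (((2 * Real.pi * k) ^ 2) * E) A B) (pb b k μ ((2 * Real.pi * k) * E) A B)
    (summable_pb b k μ _ A B (by positivity) hB0)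
    (summable_pb b k μ _ A B (by positivity) hB0)
    Metric.isOpen_ball
    (fun c s _ => by
      have h := (thetaTerm_hasDerivAt_dir b k μ τ v j c s).const_mul (mcoef b k μ j c)
      rw [mul_assoc]
      exact h)
    (fun c s hs => norm_mul_thetaTerm_le_pb b k hk μ hτ (le_refl τ.im) (le_refl τ.im)
      (norm_add_smul_single_le v j hs) c (mcoef_poly_bound b k μ j c))
    (fun c s hs => norm_mul_thetaTerm_le_pb b k hk μ hτ (le_refl τ.im) (le_refl τ.im)
      (norm_add_smul_single_le v j hs) c (mcoef_sq_poly_bound b k μ j c))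
    ht

lemma sum_mcoef_sq {l : ℕ} (b : Module.Basis (Fin l) ℝ (Evec l)) (k : ℕ) (μ : Evec l)
    (c : Fin l → ℤ) :
    ∑ j, mcoef b k μ j c * mcoef b k μ j c
      = (2 * (Real.pi:ℂ) * Complex.I * k) ^ 2 * ((⟪gam b k μ c, gam b k μ c⟫_ℝ : ℝ) : ℂ) := by
  have hin : ⟪gam b k μ c, gam b k μ c⟫_ℝ = ∑ j, gam b k μ c j * gam b k μ c j := by
    simp only [PiLp.inner_apply, RCLike.inner_apply, conj_trivial]
  rw [hin]
  push_cast
  rw [Finset.mul_sum]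
  refine Finset.sum_congr rfl fun j _ => ?_
  rw [mcoef]
  ring

lemma heat_coeff {l : ℕ} (b : Module.Basis (Fin l) ℝ (Evec l)) (k : ℕ) (hk : 0 < k) (μ : Evec l)
    (c : Fin l → ℤ) :
    -(2 * (k:ℂ) / (2 * (Real.pi:ℂ) * Complex.I)) * dcoef b k μ c
      + (1 / (2 * (Real.pi:ℂ) * Complex.I)) ^ 2 *
        ((2 * (Real.pi:ℂ) * Complex.I * k) ^ 2 * ((⟪gam b k μ c, gam b k μ c⟫_ℝ : ℝ) : ℂ))
      = ((⟪μ, μ⟫_ℝ : ℝ) : ℂ) := by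
  have hk0 : (k:ℂ) ≠ 0 := by
    exact_mod_cast Nat.cast_ne_zero.mpr hk.ne'
  have hI := Complex.I_ne_zero
  have hπ : ((Real.pi:ℝ):ℂ) ≠ 0 := Complex.ofReal_ne_zero.mpr Real.pi_ne_zero
  have h6 : (Complex.I:ℂ) ^ 6 = -1 := by
    rw [(by norm_num : (6:ℕ) = 2 * 3), pow_mul, Complex.I_sq]
    norm_num
  rw [dcoef]
  set q := ((⟪gam b k μ c, gam b k μ c⟫_ℝ : ℝ) : ℂ) with hq
  set qm := ((⟪μ, μ⟫_ℝ : ℝ) : ℂ) with hqm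
  field_simp
  ring_nf

lemma summable_term {l : ℕ} (b : Module.Basis (Fin l) ℝ (Evec l)) (k : ℕ) (hk : 0 < k)
    (μ : Evec l) {τ : ℂ} (hτ : 0 < τ.im) (v : EvecC l) :
    Summable (fun c => thetaTerm b k μ τ v c) :=
  Summable.of_norm_bounded
    (summable_pb b k μ (Real.exp (Real.pi * ‖μ‖ ^ 2 / k * τ.im))
      (2 * Real.pi * k * l * ‖v‖) (Real.pi * k * τ.im) (Real.exp_pos _).le
      (by have hk' : (0:ℝ) < k := by exact_mod_cast hk
          have := Real.pi_pos; positivity))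
    (fun c => norm_thetaTerm_le_pb b k hk μ hτ (le_refl τ.im) (le_refl τ.im)
      (le_refl ‖v‖) c)

lemma summable_mul_term {l : ℕ} (b : Module.Basis (Fin l) ℝ (Evec l)) (k : ℕ) (hk : 0 < k)
    (μ : Evec l) {τ : ℂ} (hτ : 0 < τ.im) (v : EvecC l) (K : (Fin l → ℤ) → ℂ) (Q : ℝ)
    (hK : ∀ c, ‖K c‖ ≤ Q * (1 + ‖gam b k μ c‖ ^ 2)) :
    Summable (fun c => K c * thetaTerm b k μ τ v c) := by
  have hk' : (0:ℝ) < k := by exact_mod_cast hk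
  have hπ := Real.pi_pos
  have hQ0 : 0 ≤ Q := by
    have h := le_trans (norm_nonneg (K 0)) (hK 0)
    nlinarith [sq_nonneg ‖gam b k μ 0‖]
  refine Summable.of_norm_bounded
    (summable_pb b k μ (Q * Real.exp (Real.pi * ‖μ‖ ^ 2 / k * τ.im))
      (2 * Real.pi * k * l * ‖v‖) (Real.pi * k * τ.im)
      (mul_nonneg hQ0 (Real.exp_pos _).le) (by positivity))
    (fun c => norm_mul_thetaTerm_le_pb b k hk μ hτ (le_refl τ.im) (le_refl τ.im)
      (le_refl ‖v‖) c (hK c))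


/-- `Θ_{μ,k}` is holomorphic in each variable (in `v ∈ V_ℂ`, and in `τ` on the
upper half-plane), and satisfies the heat-type eigenvalue equation
`−(2k/(2πi))·∂Θ/∂τ + (1/(2πi)²)·Σⱼ ∂²Θ/∂vⱼ² = ⟨μ,μ⟩·Θ`, the `vⱼ`-derivatives being the
complex directional derivatives in the directions of the orthonormal basis `e₁, …, e_l`. -/
theorem stmt5 {l : ℕ} (b : Module.Basis (Fin l) ℝ (Evec l)) (k : ℕ) (hk : 0 < k)
    (μ : Evec l) (hμ : μ ∈ dualLatt b) :
    (∀ τ : ℂ, 0 < τ.im → Differentiable ℂ (fun v : EvecC l => theta b k μ τ v)) ∧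
    (∀ v : EvecC l, DifferentiableOn ℂ (fun τ : ℂ => theta b k μ τ v)
      {τ : ℂ | 0 < τ.im}) ∧
    (∀ τ : ℂ, 0 < τ.im → ∀ v : EvecC l,
      -(2 * (k : ℂ) / (2 * (Real.pi : ℂ) * Complex.I)) *
          deriv (fun τ' : ℂ => theta b k μ τ' v) τ
        + (1 / (2 * (Real.pi : ℂ) * Complex.I)) ^ 2 *
            ∑ j : Fin l, iteratedDeriv 2
              (fun t : ℂ => theta b k μ τ (v + t • EuclideanSpace.single j (1 : ℂ))) 0
        = (⟪μ, μ⟫_ℝ : ℂ) * theta b k μ τ v) := by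
  refine ⟨fun τ hτ => fun v => (theta_hasFDerivAt_v b k hk μ hτ v).differentiableAt,
    fun v τ hτ => ((theta_hasDerivAt_tau b k hk μ hτ v).differentiableAt).differentiableWithinAt,
    fun τ hτ v => ?_⟩
  have hπ := Real.pi_pos
  have hk' : (0:ℝ) < k := by exact_mod_cast hk
  -- summability facts
  have S0 : Summable (fun c => thetaTerm b k μ τ v c) := summable_term b k hk μ hτ v
  have S1 : Summable (fun c => dcoef b k μ c * thetaTerm b k μ τ v c) :=
    summable_mul_term b k hk μ hτ v _ _ (norm_dcoef_le b k hk μ)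
  have S2 : ∀ j, Summable (fun c => mcoef b k μ j c * mcoef b k μ j c *
      thetaTerm b k μ τ v c) :=
    fun j => summable_mul_term b k hk μ hτ v _ _ (mcoef_sq_poly_bound b k μ j)
  -- identify the τ-derivative
  have hderiv : deriv (fun τ' : ℂ => theta b k μ τ' v) τ
      = ∑' c, dcoef b k μ c * thetaTerm b k μ τ v c :=
    (theta_hasDerivAt_tau b k hk μ hτ v).deriv
  -- identify the second directional derivatives
  have hiter : ∀ j : Fin l, iteratedDeriv 2
      (fun t : ℂ => theta b k μ τ (v + t • EuclideanSpace.single j (1 : ℂ))) 0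
      = ∑' c, mcoef b k μ j c * mcoef b k μ j c * thetaTerm b k μ τ v c := by
    intro j
    have hball0 : (0:ℂ) ∈ Metric.ball (0:ℂ) 1 := Metric.mem_ball_self one_pos
    have heq : deriv (fun t : ℂ => theta b k μ τ (v + t • EuclideanSpace.single j (1:ℂ)))
        =ᶠ[nhds (0:ℂ)] (fun t : ℂ => ∑' c, mcoef b k μ j c *
          thetaTerm b k μ τ (v + t • EuclideanSpace.single j (1:ℂ)) c) := by
      filter_upwards [Metric.ball_mem_nhds (0:ℂ) one_pos] with t ht
      exact (theta_hasDerivAt_dir b k hk μ hτ v j ht).deriv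
    rw [(by norm_num : (2:ℕ) = 1 + 1), iteratedDeriv_succ, iteratedDeriv_one]
    rw [heq.deriv_eq]
    rw [(theta_hasDerivAt_dir2 b k hk μ hτ v j hball0).deriv]
    simp
  rw [hderiv, Finset.sum_congr rfl (fun j _ => hiter j),
    ← Summable.tsum_finsetSum (fun j _ => S2 j), ← tsum_mul_left, ← tsum_mul_left,
    ← Summable.tsum_add (S1.mul_left _) ((summable_sum (fun j _ => S2 j)).mul_left _)]
  rw [theta, ← tsum_mul_left]
  refine tsum_congr fun c => ?_
  rw [← Finset.sum_mul, sum_mcoef_sq]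
  linear_combination (heat_coeff b k hk μ c) * thetaTerm b k μ τ v c
end
end

section
/- Fix a positive integer k and τ in the upper half-plane. If μ_1, …, μ_r ∈ M* are such that μ_i − μ_j ∉ kM whenever i ≠ j, then the functions v ↦ Θ_{μ_1,k}(v;τ), …, v ↦ Θ_{μ_r,k}(v;τ) on V_ℂ are linearly independent over ℂ. -/
open scoped BigOperators InnerProductSpace
open Complex Filter

noncomputable section

open scoped Topology

noncomputable section

lemma gam_eq {l : ℕ} (b : Module.Basis (Fin l) ℝ (Evec l)) (k : ℕ) (μ : Evec l)
    (c : Fin l → ℤ) : gam b k μ c = (k : ℝ)⁻¹ • μ + ∑ i, ((c i : ℝ)) • b i := by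
  simp [gam, Int.cast_smul_eq_zsmul]


lemma cbil_toC {l : ℕ} (a x : Evec l) : cbil (toC a) (toC x) = ((⟪a, x⟫_ℝ : ℝ) : ℂ) := by
  simp [cbil, toC, PiLp.inner_apply, RCLike.inner_apply]
  exact Finset.sum_congr rfl fun i _ => mul_comm _ _

/-- the `v`-independent coefficient of a theta term -/
def coefC {l : ℕ} (b : Module.Basis (Fin l) ℝ (Evec l)) (k : ℕ) (μ : Evec l)
    (τ : ℂ) (c : Fin l → ℤ) : ℂ :=
  Complex.exp ((Real.pi : ℂ) * Complex.I * (k : ℂ) * τ * (⟪gam b k μ c, gam b k μ c⟫_ℝ : ℂ)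
    - (Real.pi : ℂ) * Complex.I * τ / (k : ℂ) * (⟪μ, μ⟫_ℝ : ℂ))

lemma thetaTerm_toC {l : ℕ} (b : Module.Basis (Fin l) ℝ (Evec l)) (k : ℕ) (μ : Evec l)
    (τ : ℂ) (x : Evec l) (c : Fin l → ℤ) :
    thetaTerm b k μ τ (toC x) c
      = coefC b k μ τ c * Complex.exp (2 * (Real.pi : ℂ) * Complex.I *
          (((k : ℝ) * ⟪gam b k μ c, x⟫_ℝ : ℝ) : ℂ)) := by
  rw [thetaTerm, coefC, cbil_toC, ← Complex.exp_add]
  ring_nf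
  push_cast
  ring_nf

lemma norm_coefC {l : ℕ} (b : Module.Basis (Fin l) ℝ (Evec l)) (k : ℕ) (μ : Evec l)
    (τ : ℂ) (c : Fin l → ℤ) (hk : 0 < k) :
    ‖coefC b k μ τ c‖ = Real.exp ((Real.pi * k * ⟪gam b k μ c, gam b k μ c⟫_ℝ
        - Real.pi / k * ⟪μ, μ⟫_ℝ) * (-τ.im)) := by
  rw [coefC, Complex.norm_exp]
  congr 1
  have : (Real.pi : ℂ) * Complex.I * (k : ℂ) * τ * (⟪gam b k μ c, gam b k μ c⟫_ℝ : ℂ)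
      - (Real.pi : ℂ) * Complex.I * τ / (k : ℂ) * (⟪μ, μ⟫_ℝ : ℂ)
      = (((Real.pi * k * ⟪gam b k μ c, gam b k μ c⟫_ℝ - Real.pi / k * ⟪μ, μ⟫_ℝ : ℝ)) : ℂ)
        * (τ * Complex.I) := by
    push_cast
    field_simp
  rw [this]
  simp only [Complex.mul_re, Complex.ofReal_re, Complex.ofReal_im, Complex.I_re, Complex.I_im]
  ring


lemma gauss1 {B : ℝ} (hB : 0 < B) : Summable fun n : ℤ => Real.exp (-B * (n : ℝ) ^ 2) := by
  have h := summable_pow_mul_jacobiTheta₂_term_bound 0 (T := B / Real.pi)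
    (div_pos hB Real.pi_pos) 0
  refine h.congr fun n => ?_
  simp [mul_comm, mul_assoc, mul_div_cancel₀, Real.pi_ne_zero.symm]
  field_simp

lemma gaussPi {B : ℝ} (hB : 0 < B) (l : ℕ) :
    Summable fun c : Fin l → ℤ => Real.exp (-B * ∑ j, ((c j : ℝ)) ^ 2) := by
  induction l with
  | zero =>
      have : (fun c : Fin 0 → ℤ => Real.exp (-B * ∑ j, ((c j : ℝ)) ^ 2)) = fun _ => 1 := by
        funext c; simp
      rw [this]
      exact summable_of_finite_support (Set.Finite.subset (Set.finite_univ) (by simp))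
  | succ n ih =>
      have key : Summable fun p : ℤ × (Fin n → ℤ) =>
          Real.exp (-B * (p.1 : ℝ) ^ 2) * Real.exp (-B * ∑ j, ((p.2 j : ℝ)) ^ 2) :=
        (gauss1 hB).mul_of_nonneg ih (fun _ => (Real.exp_pos _).le)
          (fun _ => (Real.exp_pos _).le)
      have := key.comp_injective (Fin.consEquiv fun _ : Fin (n+1) => ℤ).symm.injective
      refine this.congr fun c => ?_
      simp only [Function.comp_apply, Fin.consEquiv, Equiv.coe_fn_symm_mk,
        ← Real.exp_add, Fin.sum_univ_succ, mul_add]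
      norm_num
      left
      rfl


lemma sumsq_bound {l : ℕ} (b : Module.Basis (Fin l) ℝ (Evec l)) :
    ∃ C : ℝ, 0 < C ∧ ∀ c : Fin l → ℤ,
      ∑ j, ((c j : ℝ)) ^ 2 ≤ C * ‖∑ j, (c j : ℝ) • b j‖ ^ 2 := by
  obtain ⟨C₀, hC₀⟩ := (LinearMap.toContinuousLinearMap
    (b.equivFun : Evec l →ₗ[ℝ] (Fin l → ℝ))).isBoundedLinearMap.bound
  refine ⟨l * (C₀ ^ 2) + 1, by positivity, fun c => ?_⟩
  set y : Evec l := ∑ j, (c j : ℝ) • b j with hy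
  have hcoord : ∀ j, |(c j : ℝ)| ≤ C₀ * ‖y‖ := by
    intro j
    have h1 : b.equivFun y = fun j => (c j : ℝ) := by
      rw [hy]
      ext j
      rw [Module.Basis.equivFun_apply, Module.Basis.repr_sum_self]
    have h2 : ‖b.equivFun y‖ ≤ C₀ * ‖y‖ := hC₀.2 y
    rw [h1] at h2
    calc |(c j : ℝ)| = ‖(fun j => (c j : ℝ)) j‖ := by simp
      _ ≤ ‖(fun j => (c j : ℝ))‖ := norm_le_pi_norm (fun j => (c j : ℝ)) j
      _ ≤ C₀ * ‖y‖ := h2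
  have hsum : ∑ j, ((c j : ℝ)) ^ 2 ≤ ∑ _j : Fin l, (C₀ * ‖y‖) ^ 2 := by
    apply Finset.sum_le_sum
    intro j _
    have := hcoord j
    nlinarith [abs_nonneg ((c j : ℝ)), _root_.sq_abs ((c j : ℝ))]
  simp only [Finset.sum_const, Finset.card_univ, Fintype.card_fin, nsmul_eq_mul] at hsum
  calc ∑ j, ((c j : ℝ)) ^ 2 ≤ l * (C₀ * ‖y‖) ^ 2 := hsum
    _ ≤ (l * C₀ ^ 2 + 1) * ‖y‖ ^ 2 := by nlinarith [norm_nonneg y, sq_nonneg (C₀ * ‖y‖)]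

lemma summable_norm_coefC {l : ℕ} (b : Module.Basis (Fin l) ℝ (Evec l)) (k : ℕ) (μ : Evec l)
    (τ : ℂ) (hk : 0 < k) (hτ : 0 < τ.im) :
    Summable fun c : Fin l → ℤ => ‖coefC b k μ τ c‖ := by
  obtain ⟨C, hC, hCb⟩ := sumsq_bound b
  set A : ℝ := Real.pi * k * τ.im with hA
  have hApos : 0 < A := by positivity
  set B : ℝ := A / (2 * C) with hB
  have hBpos : 0 < B := by positivity
  set M₀ : ℝ := ‖(k : ℝ)⁻¹ • μ‖ with hM₀
  set K : ℝ := Real.exp (Real.pi / k * ⟪μ, μ⟫_ℝ * τ.im + A * M₀ ^ 2) with hK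
  have key : ∀ c : Fin l → ℤ, ‖coefC b k μ τ c‖ ≤ K * Real.exp (-B * ∑ j, ((c j : ℝ)) ^ 2) := by
    intro c
    rw [norm_coefC b k μ τ c hk, hK, ← Real.exp_add, Real.exp_le_exp]
    have hq : ⟪gam b k μ c, gam b k μ c⟫_ℝ = ‖gam b k μ c‖ ^ 2 :=
      real_inner_self_eq_norm_sq _
    have hy : ∑ j, ((c j : ℝ)) ^ 2 ≤ C * ‖(∑ j, ((c j : ℝ)) • b j : Evec l)‖ ^ 2 := hCb c
    have hyg : ‖(∑ j, ((c j : ℝ)) • b j : Evec l)‖ ≤ ‖gam b k μ c‖ + M₀ := by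
      have he : (∑ j, ((c j : ℝ)) • b j : Evec l) = gam b k μ c - (k : ℝ)⁻¹ • μ := by
        rw [gam_eq]; abel
      rw [he, hM₀]
      exact norm_sub_le _ _
    have h2 : ∑ j, ((c j : ℝ)) ^ 2 ≤ 2 * C * (‖gam b k μ c‖ ^ 2 + M₀ ^ 2) := by
      have hM0 : (0:ℝ) ≤ M₀ := hM₀ ▸ norm_nonneg _
      have hsq : ‖(∑ j, ((c j : ℝ)) • b j : Evec l)‖ ^ 2 ≤ (‖gam b k μ c‖ + M₀) ^ 2 := by
        have := norm_nonneg (∑ j, ((c j : ℝ)) • b j : Evec l)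
        nlinarith
      nlinarith [sq_nonneg (‖gam b k μ c‖ - M₀), hsq, hy, hC.le,
        mul_le_mul_of_nonneg_left hsq hC.le]
    have h3 : B * ∑ j, ((c j : ℝ)) ^ 2
        ≤ Real.pi * k * τ.im * ‖gam b k μ c‖ ^ 2 + Real.pi * k * τ.im * M₀ ^ 2 := by
      have hBC : B * (2 * C) = Real.pi * k * τ.im := by
        rw [hB, hA]; field_simp
      calc B * ∑ j, ((c j : ℝ)) ^ 2 ≤ B * (2 * C * (‖gam b k μ c‖ ^ 2 + M₀ ^ 2)) := by
            exact mul_le_mul_of_nonneg_left h2 hBpos.le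
        _ = Real.pi * k * τ.im * ‖gam b k μ c‖ ^ 2 + Real.pi * k * τ.im * M₀ ^ 2 := by
            rw [← hBC]; ring
    rw [hq]
    nlinarith [h3]
  refine Summable.of_nonneg_of_le (fun c => norm_nonneg _) key ?_
  exact (gaussPi hBpos l).mul_left K

lemma norm_exp_2piI (e t : ℝ) : ‖Complex.exp (2 * (Real.pi : ℂ) * Complex.I * (e : ℂ) * (t : ℂ))‖ = 1 := by
  rw [Complex.norm_exp]
  have : (2 * (Real.pi : ℂ) * Complex.I * (e : ℂ) * (t : ℂ)).re = 0 := by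
    simp [Complex.mul_re, Complex.mul_im]
  rw [this, Real.exp_zero]

/-- average of `exp (2πi e t)` over `[0,T]`, normalized -/
lemma avg_exp_tendsto_zero {e : ℝ} (he : e ≠ 0) :
    Tendsto (fun T : ℝ => (T : ℂ)⁻¹ * ∫ t in (0:ℝ)..T,
      Complex.exp (2 * (Real.pi : ℂ) * Complex.I * (e : ℂ) * (t : ℂ))) atTop (𝓝 0) := by
  have hc : (2 * (Real.pi : ℂ) * Complex.I * (e : ℂ)) ≠ 0 := by
    simp [Real.pi_ne_zero, Complex.I_ne_zero, he, Complex.ofReal_ne_zero]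
  have hval : ∀ T : ℝ, (∫ t in (0:ℝ)..T,
      Complex.exp (2 * (Real.pi : ℂ) * Complex.I * (e : ℂ) * (t : ℂ)))
      = (Complex.exp (2 * (Real.pi : ℂ) * Complex.I * (e : ℂ) * T) - 1)
        / (2 * (Real.pi : ℂ) * Complex.I * (e : ℂ)) := by
    intro T
    rw [integral_exp_mul_complex hc]
    norm_num
  rw [tendsto_zero_iff_norm_tendsto_zero]
  have hbound : ∀ T : ℝ, 1 ≤ T → ‖(T : ℂ)⁻¹ * ∫ t in (0:ℝ)..T,
      Complex.exp (2 * (Real.pi : ℂ) * Complex.I * (e : ℂ) * (t : ℂ))‖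
      ≤ T⁻¹ * (2 / ‖(2 * (Real.pi : ℂ) * Complex.I * (e : ℂ))‖) := by
    intro T hT
    rw [hval, norm_mul, norm_inv, Complex.norm_real, Real.norm_eq_abs,
      abs_of_pos (by linarith), norm_div]
    gcongr
    show ‖Complex.exp (2 * (Real.pi : ℂ) * Complex.I * (e : ℂ) * (T : ℂ)) - 1‖ ≤ 2
    calc ‖Complex.exp (2 * (Real.pi : ℂ) * Complex.I * (e : ℂ) * (T : ℂ)) - 1‖
        ≤ ‖Complex.exp (2 * (Real.pi : ℂ) * Complex.I * (e : ℂ) * (T : ℂ))‖ + ‖(1 : ℂ)‖ :=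
          norm_sub_le _ _
      _ ≤ 2 := by rw [norm_exp_2piI]; norm_num
  have hlim : Tendsto (fun T : ℝ => T⁻¹ * (2 / ‖(2 * (Real.pi : ℂ) * Complex.I * (e : ℂ))‖))
      atTop (𝓝 0) := by
    simpa using tendsto_inv_atTop_zero.mul_const (2 / ‖(2 * (Real.pi : ℂ) * Complex.I * (e : ℂ))‖)
  refine squeeze_zero' ?_ ?_ hlim
  · filter_upwards with T using norm_nonneg _
  · filter_upwards [eventually_ge_atTop 1] with T hT using hbound T hT

lemma avg_exp_zero : ∀ T : ℝ, (∫ t in (0:ℝ)..T,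
    Complex.exp (2 * (Real.pi : ℂ) * Complex.I * ((0:ℝ) : ℂ) * (t : ℂ))) = (T : ℂ) := by
  intro T
  simp


/-- frequency of the `c`-term along direction `u`, shifted by `ν` -/
def eFreq {l : ℕ} (b : Module.Basis (Fin l) ℝ (Evec l)) (k : ℕ) (μ ν u : Evec l)
    (c : Fin l → ℤ) : ℝ :=
  (k : ℝ) * ⟪gam b k μ c, u⟫_ℝ - ⟪ν, u⟫_ℝ

lemma integrand_eq {l : ℕ} (b : Module.Basis (Fin l) ℝ (Evec l)) (k : ℕ) (μ ν u : Evec l)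
    (τ : ℂ) (t : ℝ) :
    theta b k μ τ (toC (t • u)) * Complex.exp (-(2 * (Real.pi : ℂ) * Complex.I
        * ((⟪ν, u⟫_ℝ : ℝ) : ℂ) * (t : ℂ)))
      = ∑' c : Fin l → ℤ, coefC b k μ τ c
          * Complex.exp (2 * (Real.pi : ℂ) * Complex.I * ((eFreq b k μ ν u c : ℝ) : ℂ) * (t : ℂ)) := by
  rw [theta, ← tsum_mul_right]
  congr 1
  funext c
  rw [thetaTerm_toC, mul_assoc, ← Complex.exp_add]
  congr 1
  rw [eFreq, real_inner_smul_right]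
  push_cast
  ring

lemma norm_term {l : ℕ} (b : Module.Basis (Fin l) ℝ (Evec l)) (k : ℕ) (μ : Evec l)
    (τ : ℂ) (c : Fin l → ℤ) (e t : ℝ) :
    ‖coefC b k μ τ c * Complex.exp (2 * (Real.pi : ℂ) * Complex.I * (e : ℂ) * (t : ℂ))‖
      = ‖coefC b k μ τ c‖ := by
  rw [norm_mul, norm_exp_2piI, mul_one]

lemma cont_term {l : ℕ} (b : Module.Basis (Fin l) ℝ (Evec l)) (k : ℕ) (μ : Evec l)
    (τ : ℂ) (c : Fin l → ℤ) (e : ℝ) :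
    Continuous fun t : ℝ => coefC b k μ τ c
      * Complex.exp (2 * (Real.pi : ℂ) * Complex.I * (e : ℂ) * (t : ℂ)) := by
  fun_prop

lemma cont_integrand {l : ℕ} (b : Module.Basis (Fin l) ℝ (Evec l)) (k : ℕ) (μ ν u : Evec l)
    (τ : ℂ) (hk : 0 < k) (hτ : 0 < τ.im) :
    Continuous fun t : ℝ => ∑' c : Fin l → ℤ, coefC b k μ τ c
      * Complex.exp (2 * (Real.pi : ℂ) * Complex.I * ((eFreq b k μ ν u c : ℝ) : ℂ) * (t : ℂ)) := by
  apply continuous_tsum (fun c => cont_term b k μ τ c _)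
    (summable_norm_coefC b k μ τ hk hτ)
  intro c t
  rw [norm_term]

lemma integral_theta {l : ℕ} (b : Module.Basis (Fin l) ℝ (Evec l)) (k : ℕ) (μ ν u : Evec l)
    (τ : ℂ) (hk : 0 < k) (hτ : 0 < τ.im) {T : ℝ} (hT : 0 < T) :
    (∫ t in (0:ℝ)..T, theta b k μ τ (toC (t • u)) * Complex.exp (-(2 * (Real.pi : ℂ)
        * Complex.I * ((⟪ν, u⟫_ℝ : ℝ) : ℂ) * (t : ℂ))))
      = ∑' c : Fin l → ℤ, coefC b k μ τ c
          * ∫ t in (0:ℝ)..T, Complex.exp (2 * (Real.pi : ℂ) * Complex.I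
              * ((eFreq b k μ ν u c : ℝ) : ℂ) * (t : ℂ)) := by
  have h1 : (∫ t in (0:ℝ)..T, theta b k μ τ (toC (t • u)) * Complex.exp (-(2 * (Real.pi : ℂ)
        * Complex.I * ((⟪ν, u⟫_ℝ : ℝ) : ℂ) * (t : ℂ))))
      = ∫ t in Set.Ioc (0:ℝ) T, ∑' c : Fin l → ℤ, coefC b k μ τ c
          * Complex.exp (2 * (Real.pi : ℂ) * Complex.I
            * ((eFreq b k μ ν u c : ℝ) : ℂ) * (t : ℂ)) := by
    rw [intervalIntegral.integral_of_le hT.le]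
    apply MeasureTheory.setIntegral_congr_fun measurableSet_Ioc
    intro t _
    exact integrand_eq b k μ ν u τ t
  rw [h1, MeasureTheory.integral_tsum]
  · congr 1
    funext c
    rw [← intervalIntegral.integral_of_le hT.le, intervalIntegral.integral_const_mul]
  · exact fun c => ((cont_term b k μ τ c _).aestronglyMeasurable).restrict
  · have hx : ∀ c : Fin l → ℤ, (∫⁻ t in Set.Ioc (0:ℝ) T, ‖coefC b k μ τ c
        * Complex.exp (2 * (Real.pi : ℂ) * Complex.I
          * ((eFreq b k μ ν u c : ℝ) : ℂ) * (t : ℂ))‖₊ ∂MeasureTheory.volume)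
        = ‖coefC b k μ τ c‖₊ * ENNReal.ofReal T := by
      intro c
      have : ∀ t : ℝ, (‖coefC b k μ τ c * Complex.exp (2 * (Real.pi : ℂ) * Complex.I
          * ((eFreq b k μ ν u c : ℝ) : ℂ) * (t : ℂ))‖₊ : ENNReal) = ‖coefC b k μ τ c‖₊ := by
        intro t
        congr 1
        ext
        exact norm_term b k μ τ c _ t
      simp_rw [this]
      rw [MeasureTheory.lintegral_const, MeasureTheory.Measure.restrict_apply MeasurableSet.univ,
        Set.univ_inter, Real.volume_Ioc, sub_zero]
    simp_rw [enorm_eq_nnnorm, hx]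
    rw [ENNReal.tsum_mul_right]
    apply ENNReal.mul_ne_top
    · rw [ENNReal.tsum_coe_ne_top_iff_summable]
      have := summable_norm_coefC b k μ τ hk hτ
      rwa [← NNReal.summable_coe]
      
    · exact ENNReal.ofReal_ne_top

lemma norm_ITle (e : ℝ) {T : ℝ} (hT : 0 ≤ T) :
    ‖∫ t in (0:ℝ)..T, Complex.exp (2 * (Real.pi : ℂ) * Complex.I * (e : ℂ) * (t : ℂ))‖ ≤ T := by
  have := intervalIntegral.norm_integral_le_of_norm_le_const (C := 1)
    (f := fun t : ℝ => Complex.exp (2 * (Real.pi : ℂ) * Complex.I * (e : ℂ) * (t : ℂ)))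
    (a := 0) (b := T) (fun t _ => le_of_eq (norm_exp_2piI e t))
  simpa only [sub_zero, one_mul, _root_.abs_of_nonneg hT] using this

lemma tendsto_avg {l : ℕ} (b : Module.Basis (Fin l) ℝ (Evec l)) (k : ℕ) (μ ν u : Evec l)
    (τ : ℂ) (hk : 0 < k) (hτ : 0 < τ.im) :
    Tendsto (fun T : ℝ => (T : ℂ)⁻¹ * ∑' c : Fin l → ℤ, coefC b k μ τ c
        * ∫ t in (0:ℝ)..T, Complex.exp (2 * (Real.pi : ℂ) * Complex.I
            * ((eFreq b k μ ν u c : ℝ) : ℂ) * (t : ℂ)))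
      atTop (𝓝 (∑' c : Fin l → ℤ,
        if eFreq b k μ ν u c = 0 then coefC b k μ τ c else 0)) := by
  have main : Tendsto (fun T : ℝ => ∑' c : Fin l → ℤ, (T : ℂ)⁻¹ * (coefC b k μ τ c
      * ∫ t in (0:ℝ)..T, Complex.exp (2 * (Real.pi : ℂ) * Complex.I
          * ((eFreq b k μ ν u c : ℝ) : ℂ) * (t : ℂ))))
      atTop (𝓝 (∑' c : Fin l → ℤ,
        if eFreq b k μ ν u c = 0 then coefC b k μ τ c else 0)) := by
    apply tendsto_tsum_of_dominated_convergence (bound := fun c => ‖coefC b k μ τ c‖)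
      (summable_norm_coefC b k μ τ hk hτ)
    · intro c
      by_cases hc : eFreq b k μ ν u c = 0
      · rw [if_pos hc]
        have : ∀ᶠ T : ℝ in atTop, (T : ℂ)⁻¹ * (coefC b k μ τ c
            * ∫ t in (0:ℝ)..T, Complex.exp (2 * (Real.pi : ℂ) * Complex.I
                * ((eFreq b k μ ν u c : ℝ) : ℂ) * (t : ℂ))) = coefC b k μ τ c := by
          filter_upwards [eventually_ge_atTop 1] with T hT
          rw [hc]
          rw [avg_exp_zero T]
          have hT0 : (T : ℂ) ≠ 0 := by
            simp only [ne_eq, Complex.ofReal_eq_zero]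
            linarith
          field_simp
        exact Tendsto.congr' (Filter.EventuallyEq.symm this) tendsto_const_nhds
      · rw [if_neg hc]
        have h0 := (avg_exp_tendsto_zero hc).const_mul (coefC b k μ τ c)
        simp only [mul_zero] at h0
        refine Tendsto.congr (fun T => ?_) h0
        ring
    · filter_upwards [eventually_ge_atTop 1] with T hT c
      have hT0 : (0:ℝ) < T := by linarith
      rw [norm_mul, norm_mul, norm_inv, Complex.norm_real, Real.norm_eq_abs,
        abs_of_pos hT0]
      calc T⁻¹ * (‖coefC b k μ τ c‖ * ‖∫ t in (0:ℝ)..T, Complex.exp (2 * (Real.pi : ℂ)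
            * Complex.I * ((eFreq b k μ ν u c : ℝ) : ℂ) * (t : ℂ))‖)
          ≤ T⁻¹ * (‖coefC b k μ τ c‖ * T) := by
            gcongr
            exact norm_ITle _ hT0.le
        _ = ‖coefC b k μ τ c‖ := by field_simp
  refine main.congr (fun T => ?_)
  rw [tsum_mul_left]

open MeasureTheory in
lemma exists_good_u {l : ℕ} {ι : Type*} [Countable ι] (d : ι → Evec l) :
    ∃ u : Evec l, ∀ i, d i ≠ 0 → ⟪d i, u⟫_ℝ ≠ 0 := by
  by_contra h
  push_neg at h
  have hcover : (Set.univ : Set (Evec l)) ⊆ ⋃ i, {u : Evec l | d i ≠ 0 ∧ ⟪d i, u⟫_ℝ = 0} := by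
    intro u _
    obtain ⟨i, hi1, hi2⟩ := h u
    exact Set.mem_iUnion.mpr ⟨i, hi1, hi2⟩
  have hnull : ∀ i, MeasureTheory.volume {u : Evec l | d i ≠ 0 ∧ ⟪d i, u⟫_ℝ = 0} = 0 := by
    intro i
    by_cases hd : d i = 0
    · have he : {u : Evec l | d i ≠ 0 ∧ ⟪d i, u⟫_ℝ = 0} = ∅ := by
        ext u; simp [hd]
      rw [he, measure_empty]
    · set K : Submodule ℝ (Evec l) := LinearMap.ker (innerSL ℝ (d i) : Evec l →ₗ[ℝ] ℝ) with hKdef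
      have hsub : {u : Evec l | d i ≠ 0 ∧ ⟪d i, u⟫_ℝ = 0} ⊆ (K : Set (Evec l)) := by
        intro u hu
        simpa [hKdef, LinearMap.mem_ker] using hu.2
      have hKne : K ≠ ⊤ := by
        intro htop
        have hmem : d i ∈ K := htop ▸ Submodule.mem_top
        have h2 : ⟪d i, d i⟫_ℝ = 0 := by simpa [hKdef, LinearMap.mem_ker] using hmem
        exact hd (inner_self_eq_zero.mp h2)
      exact measure_mono_null hsub (MeasureTheory.Measure.addHaar_submodule _ K hKne)
  have h0 : MeasureTheory.volume (Set.univ : Set (Evec l)) = 0 :=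
    measure_mono_null hcover (measure_iUnion_null hnull)
  have hpos : 0 < MeasureTheory.volume (Set.univ : Set (Evec l)) :=
    IsOpen.measure_pos _ isOpen_univ ⟨0, trivial⟩
  exact hpos.ne' h0

def dvec {l : ℕ} (b : Module.Basis (Fin l) ℝ (Evec l)) (k : ℕ) (μ ν : Evec l)
    (c : Fin l → ℤ) : Evec l :=
  (k : ℝ) • gam b k μ c - ν

lemma eFreq_eq_inner {l : ℕ} (b : Module.Basis (Fin l) ℝ (Evec l)) (k : ℕ) (μ ν u : Evec l)
    (c : Fin l → ℤ) : eFreq b k μ ν u c = ⟪dvec b k μ ν c, u⟫_ℝ := by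
  rw [eFreq, dvec, inner_sub_left, real_inner_smul_left]

lemma dvec_eq {l : ℕ} (b : Module.Basis (Fin l) ℝ (Evec l)) (k : ℕ) (hk : 0 < k) (μ ν : Evec l)
    (c : Fin l → ℤ) :
    dvec b k μ ν c = (μ - ν) + (k : ℝ) • (∑ i, ((c i : ℝ)) • b i) := by
  have hkne : (k : ℝ) ≠ 0 := Nat.cast_ne_zero.mpr hk.ne'
  rw [dvec, gam_eq, smul_add, smul_inv_smul₀ hkne]
  abel

lemma sum_coords_eq_zero {l : ℕ} (b : Module.Basis (Fin l) ℝ (Evec l)) {c : Fin l → ℤ}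
    (h : (∑ i, ((c i : ℝ)) • b i : Evec l) = 0) : c = 0 := by
  have h2 : (b.repr (∑ i, ((c i : ℝ)) • b i) : (Fin l → ℝ)) = fun i => (c i : ℝ) := by
    rw [Module.Basis.repr_sum_self]
  rw [h] at h2
  funext i
  have := congrFun h2 i
  simp only [map_zero, Finsupp.coe_zero, Pi.zero_apply] at this
  exact_mod_cast this.symm


/-- Fix a positive integer `k` and `τ ∈ ℍ`.  If `μ₁, …, μ_r ∈ M*` are such
that `μᵢ − μⱼ ∉ kM` whenever `i ≠ j`, then the functions `v ↦ Θ_{μᵢ,k}(v;τ)` on `V_ℂ` are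
linearly independent over `ℂ`. -/
theorem stmt6 {l r : ℕ} (b : Module.Basis (Fin l) ℝ (Evec l)) (k : ℕ) (hk : 0 < k)
    (τ : ℂ) (hτ : 0 < τ.im) (μ : Fin r → Evec l) (hμ : ∀ i, μ i ∈ dualLatt b)
    (hsep : ∀ i j : Fin r, i ≠ j → ¬∃ β ∈ latt b, μ i - μ j = (k : ℝ) • β) :
    LinearIndependent ℂ (fun i : Fin r => (fun v : EvecC l => theta b k (μ i) τ v)) := by
  rw [Fintype.linearIndependent_iff]
  intro g hg i₀
  -- the nonzero frequency vectors
  obtain ⟨u, hu⟩ := exists_good_u (fun p : Fin r × (Fin l → ℤ) => dvec b k (μ p.1) (μ i₀) p.2)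
  -- characterization of vanishing frequencies
  have hdvec : ∀ (i : Fin r) (c : Fin l → ℤ), dvec b k (μ i) (μ i₀) c = 0 ↔ (i = i₀ ∧ c = 0) := by
    intro i c
    constructor
    · intro h0
      rw [dvec_eq b k hk] at h0
      by_cases hi : i = i₀
      · subst hi
        simp only [sub_self, zero_add, smul_eq_zero, Nat.cast_eq_zero] at h0
        rcases h0 with h0 | h0
        · exact absurd h0 hk.ne'
        · exact ⟨rfl, sum_coords_eq_zero b h0⟩
      · exfalso
        apply hsep i i₀ hi
        refine ⟨∑ j, (-c) j • b j, ⟨-c, rfl⟩, ?_⟩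
        have hsum : (∑ j, (-c) j • b j : Evec l) = ∑ j, ((-c j : ℝ)) • b j := by
          simp [Int.cast_smul_eq_zsmul]
        rw [hsum]
        have hneg : (∑ j, ((-c j : ℝ)) • b j : Evec l) = -(∑ j, ((c j : ℝ)) • b j) := by
          simp only [neg_smul]
          exact Finset.sum_neg_distrib (f := fun j => ((c j : ℝ)) • b j)
        rw [hneg, smul_neg]
        exact eq_neg_of_add_eq_zero_left h0
    · rintro ⟨rfl, rfl⟩
      rw [dvec_eq b k hk]
      simp
  -- pointwise vanishing of the linear combination
  have hzero : ∀ v : EvecC l, ∑ i, g i * theta b k (μ i) τ v = 0 := by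
    intro v
    have := congrFun hg v
    simpa using this
  -- the averaged integral vanishes for every T > 0
  have key : ∀ T : ℝ, 0 < T →
      ∑ i, g i * ((T : ℂ)⁻¹ * ∑' c : Fin l → ℤ, coefC b k (μ i) τ c
        * ∫ t in (0:ℝ)..T, Complex.exp (2 * (Real.pi : ℂ) * Complex.I
            * ((eFreq b k (μ i) (μ i₀) u c : ℝ) : ℂ) * (t : ℂ))) = 0 := by
    intro T hT
    have hrw : ∀ i : Fin r, (∑' c : Fin l → ℤ, coefC b k (μ i) τ c
        * ∫ t in (0:ℝ)..T, Complex.exp (2 * (Real.pi : ℂ) * Complex.I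
            * ((eFreq b k (μ i) (μ i₀) u c : ℝ) : ℂ) * (t : ℂ)))
        = ∫ t in (0:ℝ)..T, theta b k (μ i) τ (toC (t • u))
            * Complex.exp (-(2 * (Real.pi : ℂ) * Complex.I
                * ((⟪μ i₀, u⟫_ℝ : ℝ) : ℂ) * (t : ℂ))) := by
      intro i
      exact (integral_theta b k (μ i) (μ i₀) u τ hk hτ hT).symm
    simp_rw [hrw]
    have hInt : ∀ i : Fin r, IntervalIntegrable (fun t : ℝ => theta b k (μ i) τ (toC (t • u))
        * Complex.exp (-(2 * (Real.pi : ℂ) * Complex.I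
            * ((⟪μ i₀, u⟫_ℝ : ℝ) : ℂ) * (t : ℂ)))) MeasureTheory.volume 0 T := by
      intro i
      apply Continuous.intervalIntegrable
      have heq : (fun t : ℝ => theta b k (μ i) τ (toC (t • u))
          * Complex.exp (-(2 * (Real.pi : ℂ) * Complex.I
              * ((⟪μ i₀, u⟫_ℝ : ℝ) : ℂ) * (t : ℂ))))
          = fun t : ℝ => ∑' c : Fin l → ℤ, coefC b k (μ i) τ c
              * Complex.exp (2 * (Real.pi : ℂ) * Complex.I
                  * ((eFreq b k (μ i) (μ i₀) u c : ℝ) : ℂ) * (t : ℂ)) :=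
        funext fun t => integrand_eq b k (μ i) (μ i₀) u τ t
      rw [heq]
      exact cont_integrand b k (μ i) (μ i₀) u τ hk hτ
    have hsumint : ∑ i, g i * ((T : ℂ)⁻¹ * ∫ t in (0:ℝ)..T, theta b k (μ i) τ (toC (t • u))
        * Complex.exp (-(2 * (Real.pi : ℂ) * Complex.I
            * ((⟪μ i₀, u⟫_ℝ : ℝ) : ℂ) * (t : ℂ))))
        = (T : ℂ)⁻¹ * ∫ t in (0:ℝ)..T, ∑ i, g i * (theta b k (μ i) τ (toC (t • u))
            * Complex.exp (-(2 * (Real.pi : ℂ) * Complex.I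
                * ((⟪μ i₀, u⟫_ℝ : ℝ) : ℂ) * (t : ℂ)))) := by
      rw [intervalIntegral.integral_finset_sum
        (fun i _ => (hInt i).const_mul (g i)), Finset.mul_sum]
      congr 1
      funext i
      rw [intervalIntegral.integral_const_mul]
      ring
    rw [hsumint]
    have hzero2 : ∀ t : ℝ, ∑ i, g i * (theta b k (μ i) τ (toC (t • u))
        * Complex.exp (-(2 * (Real.pi : ℂ) * Complex.I
            * ((⟪μ i₀, u⟫_ℝ : ℝ) : ℂ) * (t : ℂ)))) = 0 := by
      intro t
      have : ∑ i, g i * (theta b k (μ i) τ (toC (t • u))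
          * Complex.exp (-(2 * (Real.pi : ℂ) * Complex.I
              * ((⟪μ i₀, u⟫_ℝ : ℝ) : ℂ) * (t : ℂ))))
          = (∑ i, g i * theta b k (μ i) τ (toC (t • u)))
            * Complex.exp (-(2 * (Real.pi : ℂ) * Complex.I
                * ((⟪μ i₀, u⟫_ℝ : ℝ) : ℂ) * (t : ℂ))) := by
        rw [Finset.sum_mul]
        congr 1; funext i; ring
      rw [this, hzero, zero_mul]
    simp_rw [hzero2]
    simp
  -- limits
  have hlim : Tendsto (fun T : ℝ => ∑ i, g i * ((T : ℂ)⁻¹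
      * ∑' c : Fin l → ℤ, coefC b k (μ i) τ c
        * ∫ t in (0:ℝ)..T, Complex.exp (2 * (Real.pi : ℂ) * Complex.I
            * ((eFreq b k (μ i) (μ i₀) u c : ℝ) : ℂ) * (t : ℂ))))
      atTop (𝓝 (∑ i, g i * (∑' c : Fin l → ℤ,
        if eFreq b k (μ i) (μ i₀) u c = 0 then coefC b k (μ i) τ c else 0))) := by
    apply tendsto_finset_sum
    intro i _
    exact (tendsto_avg b k (μ i) (μ i₀) u τ hk hτ).const_mul (g i)
  have heven : (fun T : ℝ => ∑ i, g i * ((T : ℂ)⁻¹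
      * ∑' c : Fin l → ℤ, coefC b k (μ i) τ c
        * ∫ t in (0:ℝ)..T, Complex.exp (2 * (Real.pi : ℂ) * Complex.I
            * ((eFreq b k (μ i) (μ i₀) u c : ℝ) : ℂ) * (t : ℂ))))
      =ᶠ[atTop] (fun _ => (0 : ℂ)) := by
    filter_upwards [eventually_gt_atTop 0] with T hT
    exact key T hT
  have hfinal : ∑ i, g i * (∑' c : Fin l → ℤ,
      if eFreq b k (μ i) (μ i₀) u c = 0 then coefC b k (μ i) τ c else 0) = 0 :=
    tendsto_nhds_unique (hlim.congr' heven) tendsto_const_nhds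
  -- compute the limit sum
  have hL : ∀ i : Fin r, (∑' c : Fin l → ℤ,
      if eFreq b k (μ i) (μ i₀) u c = 0 then coefC b k (μ i) τ c else 0)
      = if i = i₀ then coefC b k (μ i₀) τ 0 else 0 := by
    intro i
    by_cases hi : i = i₀
    · have h00 : eFreq b k (μ i) (μ i₀) u 0 = 0 := by
        rw [eFreq_eq_inner, (hdvec i 0).mpr ⟨hi, rfl⟩, inner_zero_left]
      have hsingle := tsum_eq_single (L := SummationFilter.unconditional _) (f := fun c : Fin l → ℤ =>
          if eFreq b k (μ i) (μ i₀) u c = 0 then coefC b k (μ i) τ c else 0) 0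
        (fun c hc => by
          show (if eFreq b k (μ i) (μ i₀) u c = 0 then coefC b k (μ i) τ c else 0) = 0
          rw [if_neg]
          rw [eFreq_eq_inner]
          apply hu (i, c)
          intro h0
          exact hc ((hdvec i c).mp h0).2)
      rw [if_pos hi, hsingle]
      show (if eFreq b k (μ i) (μ i₀) u 0 = 0 then coefC b k (μ i) τ 0 else 0)
        = coefC b k (μ i₀) τ 0
      rw [if_pos h00, hi]
    · rw [if_neg hi]
      have : ∀ c : Fin l → ℤ, (if eFreq b k (μ i) (μ i₀) u c = 0
          then coefC b k (μ i) τ c else 0) = 0 := by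
        intro c
        rw [if_neg]
        rw [eFreq_eq_inner]
        apply hu (i, c)
        intro h0
        exact hi ((hdvec i c).mp h0).1
      simp_rw [this]
      exact tsum_zero
  simp_rw [hL, mul_ite, mul_zero] at hfinal
  rw [Finset.sum_ite_eq' Finset.univ i₀ (fun i => g i * coefC b k (μ i₀) τ 0)] at hfinal
  rw [if_pos (Finset.mem_univ i₀)] at hfinal
  rcases mul_eq_zero.mp hfinal with h | h
  · exact h
  · exact absurd h (by rw [coefC]; exact Complex.exp_ne_zero _)
end
end
end

section
/- Let V̂ = V × ℝ × ℝ, equipped with the symmetric bilinear form B((x,a,b),(x',a',b')) = ⟨x,x'⟩ + a·b' + a'·b. Let Π ⊂ V be a finite set, θ ∈ V, and K ∈ ℝ, and call the elements ᾱ = (α,0,0) for α ∈ Π together with α₀ = (−θ,0,1) the affine simple roots. Let λ, μ ∈ V and d ∈ ℝ, and set Λ = (λ, K, 0) and μ̂ = (μ, K, d). Assume: (a) Λ − μ̂ = Σ_{α∈Π} c_α·(α,0,0) + c₀·(−θ,0,1) with all coefficients c_α, c₀ ≥ 0; (b) B(Λ, ᾱ) > 0 for every α ∈ Π and B(Λ,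 α₀) > 0 (equivalently ⟨λ,α⟩ > 0 for all α ∈ Π and K − ⟨λ,θ⟩ > 0); (c) B(μ̂, ᾱ) ≥ 0 for every affine simple root ᾱ; and (d) B(μ̂, μ̂) = B(Λ, Λ). Then μ̂ = Λ. -/
open scoped BigOperators RealInnerProductSpace

/-- Let `V̂ = V × ℝ × ℝ` with the bilinear form
`B((x,a,b),(x',a',b')) = ⟨x,x'⟩ + a·b' + a'·b`.  If `Λ = (λ,K,0)` and `μ̂ = (μ,K,d)`
satisfy: (a) `Λ − μ̂` is a nonnegative combination of the affine simple roots `(α,0,0)`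
(`α ∈ Π`) and `(−θ,0,1)`; (b) `B(Λ,·) > 0` on all affine simple roots; (c) `B(μ̂,·) ≥ 0`
on all affine simple roots; and (d) `B(μ̂,μ̂) = B(Λ,Λ)`, then `μ̂ = Λ`. -/
theorem stmt13 {V : Type*} [NormedAddCommGroup V] [InnerProductSpace ℝ V]
    (P : Finset V) (θ : V) (K : ℝ) (lam μ : V) (d : ℝ)
    (B : V × ℝ × ℝ → V × ℝ × ℝ → ℝ)
    (hB : ∀ p q : V × ℝ × ℝ, B p q = ⟪p.1, q.1⟫ + p.2.1 * q.2.2 + q.2.1 * p.2.2)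
    (c : V → ℝ) (c₀ : ℝ) (hc : ∀ α ∈ P, 0 ≤ c α) (hc₀ : 0 ≤ c₀)
    (hdecomp : ((lam, K, 0) : V × ℝ × ℝ) - (μ, K, d) =
      (∑ α ∈ P, c α • ((α, 0, 0) : V × ℝ × ℝ)) + c₀ • ((-θ, 0, 1) : V × ℝ × ℝ))
    (hLamP : ∀ α ∈ P, 0 < B (lam, K, 0) (α, 0, 0))
    (hΛ0 : 0 < B (lam, K, 0) (-θ, 0, 1))
    (hmuP : ∀ α ∈ P, 0 ≤ B (μ, K, d) (α, 0, 0))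
    (hμ0 : 0 ≤ B (μ, K, d) (-θ, 0, 1))
    (hnorm : B (μ, K, d) (μ, K, d) = B (lam, K, 0) (lam, K, 0)) :
    ((μ, K, d) : V × ℝ × ℝ) = (lam, K, 0) := by
  classical
  have h1 : lam - μ = (∑ α ∈ P, c α • α) + c₀ • (-θ) := by
    have := congrArg Prod.fst hdecomp
    simpa [Prod.fst_sum] using this
  have h3 : (0 : ℝ) - d = c₀ := by
    have := congrArg (fun p : V × ℝ × ℝ => p.2.2) hdecomp
    simpa [Prod.snd_sum] using this
  have hd : d = -c₀ := by linarith
  -- inner product identity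
  have hnorm' : ⟪μ, μ⟫ + K * d + K * d = ⟪lam, lam⟫ := by
    have := hnorm; rw [hB, hB] at this; simpa using this
  have hinner : ⟪lam + μ, lam - μ⟫ = K * d + K * d := by
    rw [inner_add_left, inner_sub_right, inner_sub_right, real_inner_comm μ lam]
    linarith
  have hexp : ⟪lam + μ, lam - μ⟫
      = (∑ α ∈ P, c α * ⟪lam + μ, α⟫) + c₀ * ⟪lam + μ, -θ⟫ := by
    rw [h1, inner_add_right, inner_sum, inner_smul_right]
    simp [inner_smul_right]
  have key : (∑ α ∈ P, c α * (B (lam,K,0) (α,0,0) + B (μ,K,d) (α,0,0)))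
      + c₀ * (B (lam,K,0) (-θ,0,1) + B (μ,K,d) (-θ,0,1)) = 0 := by
    have e : ∀ α : V, B (lam,K,0) (α,0,0) + B (μ,K,d) (α,0,0) = ⟪lam + μ, α⟫ := by
      intro α; rw [hB, hB]; simp [inner_add_left]
    have e0 : B (lam,K,0) (-θ,0,1) + B (μ,K,d) (-θ,0,1)
        = ⟪lam + μ, -θ⟫ + K + K := by
      rw [hB, hB]; simp [inner_add_left]; ring
    simp only [e, e0]
    have := hexp.symm.trans hinner
    rw [hd] at this
    nlinarith [this]
  -- nonnegativity of summands
  have hterm : ∀ α ∈ P, 0 ≤ c α * (B (lam,K,0) (α,0,0) + B (μ,K,d) (α,0,0)) := by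
    intro α hα
    exact mul_nonneg (hc α hα) (by linarith [hLamP α hα, hmuP α hα])
  have hterm0 : 0 ≤ c₀ * (B (lam,K,0) (-θ,0,1) + B (μ,K,d) (-θ,0,1)) :=
    mul_nonneg hc₀ (by linarith)
  have hsum0 : (∑ α ∈ P, c α * (B (lam,K,0) (α,0,0) + B (μ,K,d) (α,0,0))) = 0 ∧
      c₀ * (B (lam,K,0) (-θ,0,1) + B (μ,K,d) (-θ,0,1)) = 0 := by
    constructor <;> linarith [Finset.sum_nonneg hterm, key, hterm0]
  have hc₀0 : c₀ = 0 := by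
    rcases mul_eq_zero.mp hsum0.2 with h | h
    · exact h
    · linarith
  have hall : ∀ α ∈ P, c α = 0 := by
    intro α hα
    have := (Finset.sum_eq_zero_iff_of_nonneg hterm).mp hsum0.1 α hα
    rcases mul_eq_zero.mp this with h | h
    · exact h
    · linarith [hLamP α hα, hmuP α hα]
  have hlam : lam = μ := by
    rw [hc₀0] at h1
    have : lam - μ = 0 := by
      rw [h1, Finset.sum_eq_zero (fun α hα => by rw [hall α hα, zero_smul])]; simp
    have := sub_eq_zero.mp this; exact this
  have hd0 : d = 0 := by rw [hd, hc₀0, neg_zero]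
  rw [hlam, hd0]
end
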